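/- arXiv:math/0511643 — 8 statements merged into one kernel-verified Lean document; each statement's English description precedes it below -/
import Mathlib

section
/- In a left commutative rng R with fixed left identity 1ℓ, the operation x •_{1ℓ} y := xy + yx − (yx)·1ℓ makes (R, +, •_{1ℓ}) a commutative ring with identity 1ℓ. -/
universe u

/-- A left commutative rng: an associative rng with `x*y*z = y*x*z`, a fixed left
identity `e = 1ℓ`, whose additive halo `{x : x*e = 0}` is a commutative unital ring
under a local product `sharp` with local identity `ls = 1♯`, satisfying the local
strong Hu-Liu triassociative law. -/
structure LeftCommRng (R : Type u) [NonUnitalRing R] where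
  e : R
  sharp : R → R → R
  ls : R
  left_comm : ∀ x y z : R, x * y * z = y * x * z
  e_mul : ∀ x : R, e * x = x
  ls_halo : ls * e = 0
  sharp_halo : ∀ a b : R, a * e = 0 → b * e = 0 → sharp a b * e = 0
  sharp_assoc : ∀ a b c : R, a * e = 0 → b * e = 0 → c * e = 0 →
    sharp (sharp a b) c = sharp a (sharp b c)
  sharp_comm : ∀ a b : R, a * e = 0 → b * e = 0 → sharp a b = sharp b a
  sharp_add : ∀ a b c : R, a * e = 0 → b * e = 0 → c * e = 0 →
    sharp a (b + c) = sharp a b + sharp a c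
  sharp_ls : ∀ a : R, a * e = 0 → sharp ls a = a
  triassoc : ∀ (x a b : R), a * e = 0 → b * e = 0 →
    sharp (x * a) b = x * sharp a b

/-- The commutative product `x •_{1ℓ} y := xy + yx − (yx)·1ℓ`. -/
def LeftCommRng.bullet {R : Type u} [NonUnitalRing R] (L : LeftCommRng R) (x y : R) : R :=
  x * y + y * x - y * x * L.e

/-- A left commutative subrng `S` of the ambient left commutative rng. -/
structure IsLCSubrng {U : Type u} [NonUnitalRing U] (L : LeftCommRng U) (S : Set U) : Prop where
  e_mem : L.e ∈ S
  ls_mem : L.ls ∈ S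
  add_mem : ∀ {a b : U}, a ∈ S → b ∈ S → a + b ∈ S
  neg_mem : ∀ {a : U}, a ∈ S → -a ∈ S
  mul_mem : ∀ {a b : U}, a ∈ S → b ∈ S → a * b ∈ S
  sharp_mem : ∀ {a b : U}, a ∈ S → b ∈ S → a * L.e = 0 → b * L.e = 0 → L.sharp a b ∈ S

/-- An ideal `J` of the left commutative (sub)rng `S` (take `S = Set.univ` for an
ideal of the whole rng): an additive subgroup absorbing multiplication by `S` on
both sides, whose halo part is a `♯`-ideal. -/
structure IsLCIdealIn {U : Type u} [NonUnitalRing U] (L : LeftCommRng U) (S J : Set U) : Prop where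
  subset : J ⊆ S
  zero_mem : (0 : U) ∈ J
  add_mem : ∀ {a b : U}, a ∈ J → b ∈ J → a + b ∈ J
  neg_mem : ∀ {a : U}, a ∈ J → -a ∈ J
  mul_right : ∀ {a : U}, a ∈ J → ∀ r ∈ S, a * r ∈ J
  mul_left : ∀ {a : U}, a ∈ J → ∀ r ∈ S, r * a ∈ J
  sharp_mem : ∀ {a : U}, a ∈ J → a * L.e = 0 → ∀ b ∈ S, b * L.e = 0 → L.sharp a b ∈ J

/-- A Hu-Liu prime ideal `p` of the left commutative (sub)rng `S`. -/
structure IsHLPrimeIn {U : Type u} [NonUnitalRing U] (L : LeftCommRng U) (S p : Set U)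
    extends IsLCIdealIn L S p : Prop where
  ne_top : p ≠ S
  prime00 : ∀ x ∈ S, ∀ y ∈ S, x * L.e = x → y * L.e = y → x * y ∈ p → x ∈ p ∨ y ∈ p
  prime01 : ∀ x ∈ S, ∀ y ∈ S, x * L.e = x → y * L.e = 0 → x * y ∈ p → x ∈ p ∨ y ∈ p
  prime11 : ∀ x ∈ S, ∀ y ∈ S, x * L.e = 0 → y * L.e = 0 → L.sharp x y ∈ p → x ∈ p ∨ y ∈ p

/-- `pw e x n` is `xⁿ` (with the convention `pw e x 0 = e`, the left identity). -/
def pw {R : Type u} [NonUnitalRing R] (e x : R) : ℕ → R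
  | 0 => e
  | n + 1 => x * pw e x n

/-- `spow L u n` is the `n`-th `♯`-power `u^{♯n}` (with `spow L u 0 = 1♯`). -/
def LeftCommRng.spow {R : Type u} [NonUnitalRing R] (L : LeftCommRng R) (u : R) : ℕ → R
  | 0 => L.ls
  | n + 1 => L.sharp u (L.spow u n)

/-- `u` is integral over `R₀ = R·1ℓ` inside `(U₀, ·)`. -/
def Integral0 {U : Type u} [NonUnitalRing U] (L : LeftCommRng U) (R : Set U) (u : U) : Prop :=
  ∃ n : ℕ, 1 ≤ n ∧ ∃ a : ℕ → U, (∀ i, a i ∈ R ∧ a i * L.e = a i) ∧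
    pw L.e u n + ∑ i ∈ Finset.range n, a i * pw L.e u (n - 1 - i) = 0

/-- `u` is integral over `(R₁, ♯)` inside `(U₁, ♯)`. -/
def Integral1 {U : Type u} [NonUnitalRing U] (L : LeftCommRng U) (R : Set U) (u : U) : Prop :=
  ∃ n : ℕ, 1 ≤ n ∧ ∃ a : ℕ → U, (∀ i, a i ∈ R ∧ a i * L.e = 0) ∧
    L.spow u n + ∑ i ∈ Finset.range n, L.sharp (a i) (L.spow u (n - 1 - i)) = 0

/-- `U` is graded integral over the subrng `R`. -/
def GradedIntegral {U : Type u} [NonUnitalRing U] (L : LeftCommRng U) (R : Set U) : Prop :=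
  ∀ u : U, Integral0 L R (u * L.e) ∧ Integral1 L R (u - u * L.e)

/-- `(R, +, •_{1ℓ})` is a commutative ring with identity `1ℓ`. -/
theorem bullet_commRing {R : Type u} [NonUnitalRing R] (L : LeftCommRng R) :
    (∀ x y : R, L.bullet x y = L.bullet y x) ∧
    (∀ x y z : R, L.bullet (L.bullet x y) z = L.bullet x (L.bullet y z)) ∧
    (∀ x y z : R, L.bullet x (y + z) = L.bullet x y + L.bullet x z) ∧
    (∀ x y z : R, L.bullet (x + y) z = L.bullet x z + L.bullet y z) ∧
    (∀ x : R, L.bullet L.e x = x) ∧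
    (∀ x : R, L.bullet x L.e = x) := by
  have lc : ∀ a b c : R, a * (b * c) = b * (a * c) := fun a b c => by
    rw [← mul_assoc, ← mul_assoc, L.left_comm]
  have hee : ∀ x : R, x * L.e * L.e = x * L.e := fun x => by
    rw [L.left_comm, L.e_mul]
  refine ⟨?_, ?_, ?_, ?_, ?_, ?_⟩
  · intro x y
    simp only [LeftCommRng.bullet]
    rw [L.left_comm y x L.e]
    abel
  · intro x y z
    simp only [LeftCommRng.bullet, mul_add, add_mul, mul_sub, sub_mul, mul_assoc, L.e_mul]
    rw [lc z x y, lc z y x, lc z y (x*L.e), lc z x (y*L.e)]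
    abel
  · intro x y z
    simp only [LeftCommRng.bullet, mul_add, add_mul]
    abel
  · intro x y z
    simp only [LeftCommRng.bullet, mul_add, add_mul]
    abel
  · intro x
    simp only [LeftCommRng.bullet, L.e_mul, hee]
    abel
  · intro x
    simp only [LeftCommRng.bullet, L.e_mul]
    abel
end

section
/- Let R be a left commutative rng with left identity 1ℓ. Then R decomposes as a direct sum of abelian groups R = R₀ ⊕ R₁, where R₀ := R·1ℓ and R₁ := ℏ⁺(R); explicitly, every a ∈ R can be written uniquely as a = a₀ + a₁ with a₀ = a·1ℓ ∈ R₀ and a₁ = a − a·1ℓ ∈ R₁. -/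
universe u

/-- `R = R₀ ⊕ R₁` as abelian groups, with `R₀ = R·1ℓ = {x : x·1ℓ = x}` and
`R₁ = ℏ⁺(R)`; every `a` is uniquely `a₀ + a₁` with `a₀ = a·1ℓ`, `a₁ = a − a·1ℓ`. -/
theorem grading_decomposition {R : Type u} [NonUnitalRing R] (L : LeftCommRng R) :
    ∀ a : R,
      (a * L.e) * L.e = a * L.e ∧
      (a - a * L.e) * L.e = 0 ∧
      a = a * L.e + (a - a * L.e) ∧
      (∀ b c : R, b * L.e = b → c * L.e = 0 → a = b + c →
        b = a * L.e ∧ c = a - a * L.e) := by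
  intro a
  have key : ∀ x : R, x * L.e * L.e = x * L.e := fun x => by
    rw [L.left_comm x L.e L.e, L.e_mul]
  refine ⟨key a, by rw [sub_mul, key a, sub_self], by abel, ?_⟩
  intro b c hb hc habc
  have hb' : b = a * L.e := by
    rw [habc, add_mul, hb, hc, add_zero]
  exact ⟨hb', by rw [habc, add_mul, hb, hc, add_zero, add_sub_cancel_left]⟩
end

section
/- Let R be a left commutative rng with left identity 1ℓ. Then R₀ := R·1ℓ is closed under the product of R and, with the restricted operations, (R₀,+,·) is a commutative ring with identity 1ℓ. -/
universe u

/-- `R₀ = R·1ℓ = {x : x·1ℓ = x}` is closed under the product, and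
`(R₀, +, ·)` is a commutative ring with identity `1ℓ`. -/
theorem zero_part_commRing {R : Type u} [NonUnitalRing R] (L : LeftCommRng R) :
    L.e * L.e = L.e ∧
    (∀ x y : R, x * L.e = x → y * L.e = y → (x * y) * L.e = x * y) ∧
    (∀ x y : R, x * L.e = x → y * L.e = y → x * y = y * x) ∧
    (∀ x y z : R, x * L.e = x → y * L.e = y → z * L.e = z → x * y * z = x * (y * z)) ∧
    (∀ x : R, x * L.e = x → L.e * x = x ∧ x * L.e = x) := by
  refine ⟨L.e_mul L.e, fun x y hx hy => by rw [mul_assoc, hy],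
    fun x y hx hy => by have h := L.left_comm x y L.e; rwa [mul_assoc, mul_assoc, hx, hy] at h,
    fun x y z _ _ _ => mul_assoc x y z,
    fun x hx => ⟨L.e_mul x, hx⟩⟩
end

section
/- Let R be a left commutative rng with left identity 1ℓ. Then R has no two-sided identity; equivalently, the additive halo ℏ⁺(R) = {x : x·1ℓ = 0} is nonzero (since by definition ℏ⁺(R) is a ring with a nonzero identity 1♯, one has 1♯ ≠ 0 and 1♯·1ℓ = 0, so 1ℓ is not a right identity). -/
universe u

/-- since the local identity `1♯` is nonzero, the halo is nonzero,
`1ℓ` is not a right identity, and `R` has no two-sided identity. -/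
theorem no_two_sided_identity {R : Type u} [NonUnitalRing R] (L : LeftCommRng R)
    (hls : L.ls ≠ 0) :
    (∃ x : R, x ≠ 0 ∧ x * L.e = 0) ∧
    (∃ x : R, x * L.e ≠ x) ∧
    ¬ ∃ u : R, ∀ x : R, u * x = x ∧ x * u = x := by
  refine ⟨⟨L.ls, hls, L.ls_halo⟩, ⟨L.ls, by rw [L.ls_halo]; exact fun h => hls h.symm⟩, ?_⟩
  rintro ⟨u, hu⟩
  have h1 : u = L.e := by rw [← L.e_mul u, (hu L.e).2]
  have : L.ls = 0 := by rw [← (hu L.ls).2, h1, L.ls_halo]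
  exact hls this
end

section
/- Let R be a left commutative rng with left identity 1ℓ, R₀ = R·1ℓ, R₁ = ℏ⁺(R). Then R₀·R₁ ⊆ R₁, R₁·R ⊆ R₁, and R₀·R₀ ⊆ R₀; i.e., the decomposition R = R₀ ⊕ R₁ behaves as follows: for x₀ ∈ R₀ and y₁ ∈ R₁ we have (x₀y₁)·1ℓ = 0, and for x₀, y₀ ∈ R₀ we have (x₀y₀)·1ℓ = x₀y₀. -/
universe u

/-- `R₀·R₁ ⊆ R₁`, `R₁·R ⊆ R₁` and `R₀·R₀ ⊆ R₀`. -/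
theorem grading_multiplication {R : Type u} [NonUnitalRing R] (L : LeftCommRng R) :
    (∀ x y : R, x * L.e = x → y * L.e = 0 → (x * y) * L.e = 0) ∧
    (∀ x y : R, x * L.e = 0 → (x * y) * L.e = 0) ∧
    (∀ x y : R, x * L.e = x → y * L.e = y → (x * y) * L.e = x * y) := by
  refine ⟨fun x y hx hy => ?_, fun x y hx => ?_, fun x y hx hy => ?_⟩
  · rw [mul_assoc, hy, mul_zero]
  · rw [L.left_comm, mul_assoc, hx, mul_zero]
  · rw [mul_assoc, hy]
end

section
/- (Lying-Over Theorem for left commutative rngs) Let R be a left commutative subrng of a left commutative rng U such that U is graded integral over R. Then for every Hu-Liu prime ideal p of R there exists a Hu-Liu prime ideal q of U with q ∩ R = p. -/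
universe u

namespace LyingOverAux

variable {U : Type u} [NonUnitalRing U]

section Basic
variable (L : LeftCommRng U)

lemma e_e : L.e * L.e = L.e := L.e_mul L.e

lemma halo_absorb {u : U} (hu : u * L.e = 0) (v : U) : u * v = 0 := by
  have : u * (L.e * v) = (u * L.e) * v := (mul_assoc u L.e v).symm
  rw [L.e_mul, hu, zero_mul] at this
  exact this

lemma mem0_halo (u : U) : (u - u * L.e) * L.e = 0 := by
  rw [sub_mul, mul_assoc, e_e, sub_self]

lemma mul_e_mem0 (u : U) : (u * L.e) * L.e = u * L.e := by
  rw [mul_assoc, e_e]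

lemma mul_head (u v : U) : u * v = (u * L.e) * v := by
  have h := halo_absorb L (mem0_halo L u) v
  rw [sub_mul] at h
  exact (sub_eq_zero.mp h)

lemma mul_e_mul (u v : U) : (u * v) * L.e = (u * L.e) * (v * L.e) := by
  rw [mul_assoc, mul_head L u (v * L.e)]

/-- the U₁-part of a product: `(uv)₁ = u₀ * v₁`. -/
lemma mul_part1 (u v : U) :
    u * v - (u * v) * L.e = (u * L.e) * (v - v * L.e) := by
  rw [mul_sub, ← mul_assoc, ← mul_head]

/-- `x * a = (x * 1♯) ♯ a` for `a` in the halo. -/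
lemma mul_halo_eq_sharp (x a : U) (ha : a * L.e = 0) :
    x * a = L.sharp (x * L.ls) a := by
  rw [L.triassoc x L.ls a L.ls_halo ha, L.sharp_ls a ha]

end Basic

/-- The even part `U₀ = U·1ℓ` as a type. -/
def U0 (L : LeftCommRng U) : Type u := {x : U // x * L.e = x}

/-- The halo `U₁` as a type. -/
def U1 (L : LeftCommRng U) : Type u := {x : U // x * L.e = 0}

variable {L : LeftCommRng U}

section Instances

instance : Add (U0 L) := ⟨fun a b => ⟨a.1 + b.1, by rw [add_mul, a.2, b.2]⟩⟩
instance : Zero (U0 L) := ⟨⟨0, zero_mul _⟩⟩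
instance : Neg (U0 L) := ⟨fun a => ⟨-a.1, by rw [neg_mul, a.2]⟩⟩
instance : Sub (U0 L) := ⟨fun a b => ⟨a.1 - b.1, by rw [sub_mul, a.2, b.2]⟩⟩
instance : SMul ℕ (U0 L) :=
  ⟨fun n a => ⟨n • a.1, by rw [smul_mul_assoc, a.2]⟩⟩
instance : SMul ℤ (U0 L) :=
  ⟨fun n a => ⟨n • a.1, by rw [smul_mul_assoc, a.2]⟩⟩

instance : Add (U1 L) := ⟨fun a b => ⟨a.1 + b.1, by rw [add_mul, a.2, b.2, add_zero]⟩⟩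
instance : Zero (U1 L) := ⟨⟨0, zero_mul _⟩⟩
instance : Neg (U1 L) := ⟨fun a => ⟨-a.1, by rw [neg_mul, a.2, neg_zero]⟩⟩
instance : Sub (U1 L) := ⟨fun a b => ⟨a.1 - b.1, by rw [sub_mul, a.2, b.2, sub_zero]⟩⟩
instance : SMul ℕ (U1 L) :=
  ⟨fun n a => ⟨n • a.1, by rw [smul_mul_assoc, a.2, smul_zero]⟩⟩
instance : SMul ℤ (U1 L) :=
  ⟨fun n a => ⟨n • a.1, by rw [smul_mul_assoc, a.2, smul_zero]⟩⟩

instance : AddCommGroup (U0 L) :=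
  Function.Injective.addCommGroup (fun a : U0 L => a.1) Subtype.val_injective
    rfl (fun _ _ => rfl) (fun _ => rfl) (fun _ _ => rfl) (fun _ _ => rfl) (fun _ _ => rfl)

instance : AddCommGroup (U1 L) :=
  Function.Injective.addCommGroup (fun a : U1 L => a.1) Subtype.val_injective
    rfl (fun _ _ => rfl) (fun _ => rfl) (fun _ _ => rfl) (fun _ _ => rfl) (fun _ _ => rfl)

end Instances

instance : CommRing (U0 L) where
  __ := (inferInstance : AddCommGroup (U0 L))
  mul a b := ⟨a.1 * b.1, by rw [mul_assoc, b.2]⟩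
  one := ⟨L.e, e_e L⟩
  left_distrib a b c := Subtype.ext (mul_add a.1 b.1 c.1)
  right_distrib a b c := Subtype.ext (add_mul a.1 b.1 c.1)
  zero_mul a := Subtype.ext (zero_mul a.1)
  mul_zero a := Subtype.ext (mul_zero a.1)
  mul_assoc a b c := Subtype.ext (mul_assoc a.1 b.1 c.1)
  one_mul a := Subtype.ext (L.e_mul a.1)
  mul_one a := Subtype.ext a.2
  mul_comm a b := Subtype.ext (by
    have h1 : (a.1 * b.1) * L.e = a.1 * b.1 := by rw [mul_assoc, b.2]
    have h2 : (b.1 * a.1) * L.e = b.1 * a.1 := by rw [mul_assoc, a.2]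
    calc a.1 * b.1 = (a.1 * b.1) * L.e := h1.symm
    _ = (b.1 * a.1) * L.e := L.left_comm a.1 b.1 L.e
    _ = b.1 * a.1 := h2)

@[simp] lemma U0.val_mul (a b : U0 L) : (a * b).1 = a.1 * b.1 := rfl
@[simp] lemma U0.val_add (a b : U0 L) : (a + b).1 = a.1 + b.1 := rfl
@[simp] lemma U0.val_one : (1 : U0 L).1 = L.e := rfl
@[simp] lemma U0.val_zero : (0 : U0 L).1 = 0 := rfl

lemma sharp_zero (a : U) (ha : a * L.e = 0) : L.sharp a 0 = 0 := by
  have h := L.sharp_add a 0 0 ha (zero_mul _) (zero_mul _)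
  rw [add_zero] at h
  exact left_eq_add.mp h

instance : CommRing (U1 L) where
  __ := (inferInstance : AddCommGroup (U1 L))
  mul a b := ⟨L.sharp a.1 b.1, L.sharp_halo a.1 b.1 a.2 b.2⟩
  one := ⟨L.ls, L.ls_halo⟩
  left_distrib a b c := Subtype.ext (L.sharp_add a.1 b.1 c.1 a.2 b.2 c.2)
  right_distrib a b c := Subtype.ext (by
    have hab : (a.1 + b.1) * L.e = 0 := by rw [add_mul, a.2, b.2, add_zero]
    show L.sharp (a.1 + b.1) c.1 = L.sharp a.1 c.1 + L.sharp b.1 c.1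
    rw [L.sharp_comm _ _ hab c.2, L.sharp_add c.1 a.1 b.1 c.2 a.2 b.2,
      L.sharp_comm c.1 a.1 c.2 a.2, L.sharp_comm c.1 b.1 c.2 b.2])
  zero_mul a := Subtype.ext (by
    show L.sharp 0 a.1 = 0
    rw [L.sharp_comm 0 a.1 (zero_mul _) a.2]; exact sharp_zero a.1 a.2)
  mul_zero a := Subtype.ext (sharp_zero a.1 a.2)
  mul_assoc a b c := Subtype.ext (L.sharp_assoc a.1 b.1 c.1 a.2 b.2 c.2)
  one_mul a := Subtype.ext (L.sharp_ls a.1 a.2)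
  mul_one a := Subtype.ext (by
    show L.sharp a.1 L.ls = a.1
    rw [L.sharp_comm a.1 L.ls a.2 L.ls_halo]; exact L.sharp_ls a.1 a.2)
  mul_comm a b := Subtype.ext (L.sharp_comm a.1 b.1 a.2 b.2)

@[simp] lemma U1.val_mul (a b : U1 L) : (a * b).1 = L.sharp a.1 b.1 := rfl
@[simp] lemma U1.val_add (a b : U1 L) : (a + b).1 = a.1 + b.1 := rfl
@[simp] lemma U1.val_one : (1 : U1 L).1 = L.ls := rfl
@[simp] lemma U1.val_zero : (0 : U1 L).1 = 0 := rfl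


section Subrings

lemma zero_mem_R {L : LeftCommRng U} {R : Set U} (hR : IsLCSubrng L R) : (0 : U) ∈ R := by
  have h := hR.add_mem hR.e_mem (hR.neg_mem hR.e_mem)
  rwa [add_neg_cancel] at h

/-- `R₀` as a subring of `U₀`. -/
def R0sub (L : LeftCommRng U) (R : Set U) (hR : IsLCSubrng L R) : Subring (U0 L) where
  carrier := {x : U0 L | x.1 ∈ R}
  one_mem' := hR.e_mem
  mul_mem' ha hb := hR.mul_mem ha hb
  add_mem' ha hb := hR.add_mem ha hb
  zero_mem' := (zero_mem_R hR : (0 : U) ∈ R)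
  neg_mem' ha := hR.neg_mem ha

/-- `R₁` as a subring of `U₁`. -/
def R1sub (L : LeftCommRng U) (R : Set U) (hR : IsLCSubrng L R) : Subring (U1 L) where
  carrier := {x : U1 L | x.1 ∈ R}
  one_mem' := hR.ls_mem
  mul_mem' {a b} ha hb := hR.sharp_mem ha hb a.2 b.2
  add_mem' ha hb := hR.add_mem ha hb
  zero_mem' := (zero_mem_R hR : (0 : U) ∈ R)
  neg_mem' ha := hR.neg_mem ha

end Subrings

section Proj

variable (L : LeftCommRng U)

/-- constructor for `U₀` -/
def mk0 (a : U) (ha : a * L.e = a) : U0 L := ⟨a, ha⟩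

/-- constructor for `U₁` -/
def mk1 (a : U) (ha : a * L.e = 0) : U1 L := ⟨a, ha⟩

@[simp] lemma mk0_val (a : U) (ha : a * L.e = a) : (mk0 L a ha).1 = a := rfl
@[simp] lemma mk1_val (a : U) (ha : a * L.e = 0) : (mk1 L a ha).1 = a := rfl

/-- projection to the even part -/
def pi0 (u : U) : U0 L := ⟨u * L.e, mul_e_mem0 L u⟩

/-- projection to the halo part -/
def pi1 (u : U) : U1 L := ⟨u - u * L.e, mem0_halo L u⟩

@[simp] lemma pi0_val (u : U) : (pi0 L u).1 = u * L.e := rfl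
@[simp] lemma pi1_val (u : U) : (pi1 L u).1 = u - u * L.e := rfl

lemma pi0_add (u v : U) : pi0 L (u + v) = pi0 L u + pi0 L v :=
  Subtype.ext (add_mul u v L.e)

lemma pi1_add (u v : U) : pi1 L (u + v) = pi1 L u + pi1 L v :=
  Subtype.ext (by show u + v - (u + v) * L.e = (u - u * L.e) + (v - v * L.e); rw [add_mul]; abel)

lemma pi0_neg (u : U) : pi0 L (-u) = -pi0 L u := Subtype.ext (neg_mul u L.e)

lemma pi1_neg (u : U) : pi1 L (-u) = -pi1 L u :=
  Subtype.ext (by show -u - -u * L.e = -(u - u * L.e); rw [neg_mul]; abel)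

lemma pi0_zero : pi0 L 0 = 0 := Subtype.ext (zero_mul L.e)

lemma pi1_zero : pi1 L 0 = 0 := Subtype.ext (by show (0 : U) - 0 * L.e = 0; rw [zero_mul, sub_zero])

lemma pi0_e : pi0 L L.e = 1 := Subtype.ext (e_e L)

lemma pi0_of_mem0 (x : U) (hx : x * L.e = x) : pi0 L x = mk0 L x hx := Subtype.ext hx

lemma pi1_of_mem0 (x : U) (hx : x * L.e = x) : pi1 L x = 0 :=
  Subtype.ext (by show x - x * L.e = 0; rw [hx, sub_self])

lemma pi0_of_halo (x : U) (hx : x * L.e = 0) : pi0 L x = 0 := Subtype.ext hx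

lemma pi1_of_halo (x : U) (hx : x * L.e = 0) : pi1 L x = mk1 L x hx :=
  Subtype.ext (by show x - x * L.e = x; rw [hx, sub_zero])

/-- the ring homomorphism `φ : U₀ → U₁`, `x ↦ x·1♯`. -/
def phi : U0 L →+* U1 L where
  toFun x := ⟨x.1 * L.ls, by rw [mul_assoc, L.ls_halo, mul_zero]⟩
  map_one' := Subtype.ext (L.e_mul L.ls)
  map_mul' x y := Subtype.ext (by
    have hy : (y.1 * L.ls) * L.e = 0 := by rw [mul_assoc, L.ls_halo, mul_zero]
    show (x.1 * y.1) * L.ls = L.sharp (x.1 * L.ls) (y.1 * L.ls)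
    rw [L.triassoc x.1 L.ls (y.1 * L.ls) L.ls_halo hy, L.sharp_ls _ hy, mul_assoc])
  map_zero' := Subtype.ext (zero_mul L.ls)
  map_add' x y := Subtype.ext (add_mul x.1 y.1 L.ls)

@[simp] lemma phi_val (x : U0 L) : (phi L x).1 = x.1 * L.ls := rfl

lemma pi0_mul (u v : U) : pi0 L (u * v) = pi0 L u * pi0 L v :=
  Subtype.ext (mul_e_mul L u v)

lemma pi1_mul (u v : U) : pi1 L (u * v) = phi L (pi0 L u) * pi1 L v :=
  Subtype.ext (by
    show u * v - (u * v) * L.e = L.sharp ((u * L.e) * L.ls) (v - v * L.e)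
    rw [mul_part1, mul_halo_eq_sharp L (u * L.e) (v - v * L.e) (mem0_halo L v)])

lemma pi1_sharp (a b : U) (ha : a * L.e = 0) (hb : b * L.e = 0) :
    pi1 L (L.sharp a b) = mk1 L a ha * mk1 L b hb :=
  Subtype.ext (by
    show L.sharp a b - L.sharp a b * L.e = L.sharp a b
    rw [L.sharp_halo a b ha hb, sub_zero])

lemma decomp (u : U) : u = (u * L.e) + (u - u * L.e) := by abel

end Proj

section Integral

open Polynomial

variable (L : LeftCommRng U) (R : Set U) (hR : IsLCSubrng L R)

/-- `val` as an additive homomorphism `U₀ → U`. -/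
def val0 : U0 L →+ U where
  toFun := Subtype.val
  map_zero' := rfl
  map_add' _ _ := rfl

/-- `val` as an additive homomorphism `U₁ → U`. -/
def val1 : U1 L →+ U where
  toFun := Subtype.val
  map_zero' := rfl
  map_add' _ _ := rfl

lemma mem_R0sub {L : LeftCommRng U} {R : Set U} {hR : IsLCSubrng L R} {x : U0 L} :
    x ∈ R0sub L R hR ↔ x.1 ∈ R := Iff.rfl

lemma mem_R1sub {L : LeftCommRng U} {R : Set U} {hR : IsLCSubrng L R} {x : U1 L} :
    x ∈ R1sub L R hR ↔ x.1 ∈ R := Iff.rfl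

lemma pow_val0 (x : U0 L) (n : ℕ) : (x ^ n).1 = pw L.e x.1 n := by
  induction n with
  | zero => rfl
  | succ n ih => rw [pow_succ', pw]; show x.1 * (x ^ n).1 = _; rw [ih]

lemma pow_val1 (x : U1 L) (n : ℕ) : (x ^ n).1 = L.spow x.1 n := by
  induction n with
  | zero => rfl
  | succ n ih => rw [pow_succ', LeftCommRng.spow]; show L.sharp x.1 (x ^ n).1 = _; rw [ih]

private lemma monic_aux {A : Type u} [CommRing A] (n : ℕ) (hn : 1 ≤ n) (c : ℕ → A) :
    (X ^ n + ∑ i ∈ Finset.range n, C (c i) * X ^ (n - 1 - i)).Monic := by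
  apply monic_X_pow_add
  apply lt_of_le_of_lt (degree_sum_le _ _)
  apply Finset.sup_lt_iff (by exact_mod_cast WithBot.bot_lt_coe n) |>.mpr
  intro i _
  apply lt_of_le_of_lt (degree_C_mul_X_pow_le _ _)
  exact_mod_cast Nat.lt_of_le_of_lt (Nat.sub_le _ _) (Nat.sub_lt hn one_pos)

theorem isIntegral0 (hint : GradedIntegral L R) :
    Algebra.IsIntegral ↥(R0sub L R hR) (U0 L) := by
  constructor
  intro x
  have h0 := (hint x.1).1
  rw [x.2] at h0
  obtain ⟨n, hn, a, ha, hsum⟩ := h0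
  set A : ℕ → ↥(R0sub L R hR) := fun i => ⟨⟨a i, (ha i).2⟩, mem_R0sub.mpr (ha i).1⟩ with hA
  refine ⟨X ^ n + ∑ i ∈ Finset.range n, C (A i) * X ^ (n - 1 - i), monic_aux n hn A, ?_⟩
  rw [← aeval_def]
  have : aeval x (X ^ n + ∑ i ∈ Finset.range n, C (A i) * X ^ (n - 1 - i)) =
      x ^ n + ∑ i ∈ Finset.range n, (algebraMap ↥(R0sub L R hR) (U0 L) (A i)) * x ^ (n - 1 - i) := by
    rw [map_add, map_pow, aeval_X, map_sum]
    congr 1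
    refine Finset.sum_congr rfl fun i _ => ?_
    rw [map_mul, aeval_C, map_pow, aeval_X]
  rw [this]
  apply Subtype.ext
  have hv : (x ^ n + ∑ i ∈ Finset.range n,
        (algebraMap ↥(R0sub L R hR) (U0 L) (A i)) * x ^ (n - 1 - i)).1
      = pw L.e x.1 n + ∑ i ∈ Finset.range n, a i * (pw L.e x.1 (n - 1 - i)) := by
    show (val0 L) (x ^ n + ∑ i ∈ Finset.range n,
        (algebraMap ↥(R0sub L R hR) (U0 L) (A i)) * x ^ (n - 1 - i))
      = pw L.e x.1 n + ∑ i ∈ Finset.range n, a i * (pw L.e x.1 (n - 1 - i))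
    rw [map_add, map_sum (val0 L)]
    congr 1
    · exact pow_val0 L x n
    · refine Finset.sum_congr rfl fun i _ => ?_
      show ((algebraMap ↥(R0sub L R hR) (U0 L) (A i)) * x ^ (n - 1 - i)).1 = _
      rw [U0.val_mul]
      congr 1
      exact pow_val0 L x _
  rw [hv]
  rw [show ((0 : U0 L)).1 = (0 : U) from rfl]
  exact hsum

theorem isIntegral1 (hint : GradedIntegral L R) :
    Algebra.IsIntegral ↥(R1sub L R hR) (U1 L) := by
  constructor
  intro x
  have h0 := (hint x.1).2
  rw [x.2, sub_zero] at h0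
  obtain ⟨n, hn, a, ha, hsum⟩ := h0
  set A : ℕ → ↥(R1sub L R hR) := fun i => ⟨⟨a i, (ha i).2⟩, mem_R1sub.mpr (ha i).1⟩ with hA
  refine ⟨X ^ n + ∑ i ∈ Finset.range n, C (A i) * X ^ (n - 1 - i), monic_aux n hn A, ?_⟩
  rw [← aeval_def]
  have : aeval x (X ^ n + ∑ i ∈ Finset.range n, C (A i) * X ^ (n - 1 - i)) =
      x ^ n + ∑ i ∈ Finset.range n, (algebraMap ↥(R1sub L R hR) (U1 L) (A i)) * x ^ (n - 1 - i) := by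
    rw [map_add, map_pow, aeval_X, map_sum]
    congr 1
    refine Finset.sum_congr rfl fun i _ => ?_
    rw [map_mul, aeval_C, map_pow, aeval_X]
  rw [this]
  apply Subtype.ext
  have hv : (x ^ n + ∑ i ∈ Finset.range n,
        (algebraMap ↥(R1sub L R hR) (U1 L) (A i)) * x ^ (n - 1 - i)).1
      = L.spow x.1 n + ∑ i ∈ Finset.range n, L.sharp (a i) (L.spow x.1 (n - 1 - i)) := by
    show (val1 L) (x ^ n + ∑ i ∈ Finset.range n,
        (algebraMap ↥(R1sub L R hR) (U1 L) (A i)) * x ^ (n - 1 - i))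
      = L.spow x.1 n + ∑ i ∈ Finset.range n, L.sharp (a i) (L.spow x.1 (n - 1 - i))
    rw [map_add, map_sum (val1 L)]
    congr 1
    · exact pow_val1 L x n
    · refine Finset.sum_congr rfl fun i _ => ?_
      show ((algebraMap ↥(R1sub L R hR) (U1 L) (A i)) * x ^ (n - 1 - i)).1 = _
      rw [U1.val_mul]
      congr 1
      exact pow_val1 L x _
  rw [hv]
  rw [show ((0 : U1 L)).1 = (0 : U) from rfl]
  exact hsum

end Integral


section Main

variable (L : LeftCommRng U) (R : Set U) (hR : IsLCSubrng L R) (p : Set U)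

lemma e_notMem (hp : IsHLPrimeIn L R p) : L.e ∉ p := fun he =>
  hp.ne_top (Set.Subset.antisymm hp.subset (fun r hr => by
    have := hp.mul_right he r hr
    rwa [L.e_mul r] at this))

/-- `p₀` as an ideal of `R₀`. -/
def p0I (hp : IsHLPrimeIn L R p) : Ideal ↥(R0sub L R hR) where
  carrier := {z | z.1.1 ∈ p}
  add_mem' ha hb := hp.add_mem ha hb
  zero_mem' := hp.zero_mem
  smul_mem' c z hz := by
    show (c * z : ↥(R0sub L R hR)).1.1 ∈ p
    exact hp.mul_left hz c.1.1 (mem_R0sub.mp c.2)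

/-- `p₁` as an ideal of `R₁`. -/
def p1I (hp : IsHLPrimeIn L R p) : Ideal ↥(R1sub L R hR) where
  carrier := {z | z.1.1 ∈ p}
  add_mem' ha hb := hp.add_mem ha hb
  zero_mem' := hp.zero_mem
  smul_mem' c z hz := by
    show L.sharp c.1.1 z.1.1 ∈ p
    rw [L.sharp_comm c.1.1 z.1.1 c.1.2 z.1.2]
    exact hp.sharp_mem hz z.1.2 c.1.1 (mem_R1sub.mp c.2) c.1.2

lemma mem_p0I (hp : IsHLPrimeIn L R p) {z : ↥(R0sub L R hR)} :
    z ∈ p0I L R hR p hp ↔ z.1.1 ∈ p := Iff.rfl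

lemma mem_p1I (hp : IsHLPrimeIn L R p) {z : ↥(R1sub L R hR)} :
    z ∈ p1I L R hR p hp ↔ z.1.1 ∈ p := Iff.rfl

lemma p0I_prime (hp : IsHLPrimeIn L R p) : (p0I L R hR p hp).IsPrime := by
  rw [Ideal.isPrime_iff]
  constructor
  · intro h
    have h1 : (1 : ↥(R0sub L R hR)) ∈ p0I L R hR p hp := h ▸ Submodule.mem_top
    exact e_notMem L R p hp h1
  · intro x y hxy
    exact hp.prime00 x.1.1 (mem_R0sub.mp x.2) y.1.1 (mem_R0sub.mp y.2) x.1.2 y.1.2 hxy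

lemma p1I_prime (hp : IsHLPrimeIn L R p) (hls : L.ls ∉ p) : (p1I L R hR p hp).IsPrime := by
  rw [Ideal.isPrime_iff]
  constructor
  · intro h
    have h1 : (1 : ↥(R1sub L R hR)) ∈ p1I L R hR p hp := h ▸ Submodule.mem_top
    exact hls h1
  · intro x y hxy
    exact hp.prime11 x.1.1 (mem_R1sub.mp x.2) y.1.1 (mem_R1sub.mp y.2) x.1.2 y.1.2 hxy

lemma comap_bot_le0 (hp : IsHLPrimeIn L R p) :
    Ideal.comap (algebraMap ↥(R0sub L R hR) (U0 L)) ⊥ ≤ p0I L R hR p hp := by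
  intro z hz
  rw [Ideal.mem_comap, Ideal.mem_bot] at hz
  show z.1.1 ∈ p
  rw [show z.1.1 = (0 : U) from congrArg Subtype.val hz]
  exact hp.zero_mem

lemma comap_bot_le1 (hp : IsHLPrimeIn L R p) :
    Ideal.comap (algebraMap ↥(R1sub L R hR) (U1 L)) ⊥ ≤ p1I L R hR p hp := by
  intro z hz
  rw [Ideal.mem_comap, Ideal.mem_bot] at hz
  show z.1.1 ∈ p
  rw [show z.1.1 = (0 : U) from congrArg Subtype.val hz]
  exact hp.zero_mem

lemma transfer0 (hp : IsHLPrimeIn L R p) (Q : Ideal (U0 L))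
    (hQcomap : Q.comap (algebraMap ↥(R0sub L R hR) (U0 L)) = p0I L R hR p hp) :
    ∀ x : U0 L, x.1 ∈ R → (x ∈ Q ↔ x.1 ∈ p) := by
  intro x hx
  have h := Ideal.ext_iff.mp hQcomap ⟨x, mem_R0sub.mpr hx⟩
  rw [Ideal.mem_comap] at h
  exact h

lemma transfer1 (hp : IsHLPrimeIn L R p) (Q : Ideal (U1 L))
    (hQcomap : Q.comap (algebraMap ↥(R1sub L R hR) (U1 L)) = p1I L R hR p hp) :
    ∀ x : U1 L, x.1 ∈ R → (x ∈ Q ↔ x.1 ∈ p) := by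
  intro x hx
  have h := Ideal.ext_iff.mp hQcomap ⟨x, mem_R1sub.mpr hx⟩
  rw [Ideal.mem_comap] at h
  exact h

include hR in
/-- Case `1♯ ∈ p`. -/
lemma caseB (hp : IsHLPrimeIn L R p) (hls : L.ls ∈ p) (Q : Ideal (U0 L))
    (Qprime : Q.IsPrime) (hQ : ∀ x : U0 L, x.1 ∈ R → (x ∈ Q ↔ x.1 ∈ p)) :
    ∃ q : Set U, IsHLPrimeIn L Set.univ q ∧ q ∩ R = p := by
  refine ⟨{u : U | pi0 L u ∈ Q}, ⟨⟨fun _ _ => Set.mem_univ _, ?_, ?_, ?_, ?_, ?_, ?_⟩,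
    ?_, ?_, ?_, ?_⟩, ?_⟩
  · show pi0 L 0 ∈ Q
    rw [pi0_zero]; exact Q.zero_mem
  · intro a b ha hb
    show pi0 L (a + b) ∈ Q
    rw [pi0_add]; exact Q.add_mem ha hb
  · intro a ha
    show pi0 L (-a) ∈ Q
    rw [pi0_neg]; exact neg_mem ha
  · intro a ha r _
    show pi0 L (a * r) ∈ Q
    rw [pi0_mul]; exact Q.mul_mem_right _ ha
  · intro a ha r _
    show pi0 L (r * a) ∈ Q
    rw [pi0_mul]; exact Q.mul_mem_left _ ha
  · intro a _ ha0 b _ hb0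
    show pi0 L (L.sharp a b) ∈ Q
    rw [pi0_of_halo L _ (L.sharp_halo a b ha0 hb0)]; exact Q.zero_mem
  · intro h
    have he : L.e ∈ {u : U | pi0 L u ∈ Q} := by rw [h]; trivial
    have h1 : pi0 L L.e ∈ Q := he
    rw [pi0_e] at h1
    exact Qprime.ne_top ((Ideal.eq_top_iff_one Q).mpr h1)
  · intro x _ y _ _ _ hxy
    have h : pi0 L x * pi0 L y ∈ Q := by
      have h0 : pi0 L (x * y) ∈ Q := hxy
      rwa [pi0_mul] at h0
    exact Qprime.mem_or_mem h
  · intro x _ y _ _ hy _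
    refine Or.inr ?_
    show pi0 L y ∈ Q
    rw [pi0_of_halo L y hy]; exact Q.zero_mem
  · intro x _ y _ hx _ _
    refine Or.inl ?_
    show pi0 L x ∈ Q
    rw [pi0_of_halo L x hx]; exact Q.zero_mem
  · ext r
    constructor
    · rintro ⟨hq, hrR⟩
      have hq' : pi0 L r ∈ Q := hq
      have h0 : r * L.e ∈ p := (hQ (pi0 L r) (hR.mul_mem hrR hR.e_mem)).mp hq'
      have hm : r - r * L.e ∈ R := by
        rw [sub_eq_add_neg]
        exact hR.add_mem hrR (hR.neg_mem (hR.mul_mem hrR hR.e_mem))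
      have h1 : r - r * L.e ∈ p := by
        rw [← L.sharp_ls (r - r * L.e) (mem0_halo L r)]
        exact hp.sharp_mem hls L.ls_halo _ hm (mem0_halo L r)
      have : r = r * L.e + (r - r * L.e) := by abel
      rw [this]
      exact hp.add_mem h0 h1
    · intro hrp
      have hrR : r ∈ R := hp.subset hrp
      refine ⟨?_, hrR⟩
      show pi0 L r ∈ Q
      exact (hQ (pi0 L r) (hR.mul_mem hrR hR.e_mem)).mpr (hp.mul_right hrp L.e hR.e_mem)

include hR in
/-- Case `1♯ ∉ p`. -/
lemma caseA (hp : IsHLPrimeIn L R p) (hls : L.ls ∉ p) (Q : Ideal (U1 L))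
    (Qprime : Q.IsPrime) (hQ : ∀ x : U1 L, x.1 ∈ R → (x ∈ Q ↔ x.1 ∈ p)) :
    ∃ q : Set U, IsHLPrimeIn L Set.univ q ∧ q ∩ R = p := by
  refine ⟨{u : U | phi L (pi0 L u) ∈ Q ∧ pi1 L u ∈ Q},
    ⟨⟨fun _ _ => Set.mem_univ _, ?_, ?_, ?_, ?_, ?_, ?_⟩, ?_, ?_, ?_, ?_⟩, ?_⟩
  · refine ⟨?_, ?_⟩
    · show phi L (pi0 L 0) ∈ Q
      rw [pi0_zero, map_zero]; exact Q.zero_mem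
    · show pi1 L 0 ∈ Q
      rw [pi1_zero]; exact Q.zero_mem
  · rintro a b ⟨ha0, ha1⟩ ⟨hb0, hb1⟩
    refine ⟨?_, ?_⟩
    · show phi L (pi0 L (a + b)) ∈ Q
      rw [pi0_add, map_add]; exact Q.add_mem ha0 hb0
    · show pi1 L (a + b) ∈ Q
      rw [pi1_add]; exact Q.add_mem ha1 hb1
  · rintro a ⟨ha0, ha1⟩
    refine ⟨?_, ?_⟩
    · show phi L (pi0 L (-a)) ∈ Q
      rw [pi0_neg, map_neg]; exact neg_mem ha0
    · show pi1 L (-a) ∈ Q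
      rw [pi1_neg]; exact neg_mem ha1
  · rintro a ⟨ha0, ha1⟩ r _
    refine ⟨?_, ?_⟩
    · show phi L (pi0 L (a * r)) ∈ Q
      rw [pi0_mul, map_mul]; exact Q.mul_mem_right _ ha0
    · show pi1 L (a * r) ∈ Q
      rw [pi1_mul]; exact Q.mul_mem_right _ ha0
  · rintro a ⟨ha0, ha1⟩ r _
    refine ⟨?_, ?_⟩
    · show phi L (pi0 L (r * a)) ∈ Q
      rw [pi0_mul, map_mul]; exact Q.mul_mem_left _ ha0
    · show pi1 L (r * a) ∈ Q
      rw [pi1_mul]; exact Q.mul_mem_left _ ha1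
  · rintro a ⟨ha0, ha1⟩ hae b _ hbe
    refine ⟨?_, ?_⟩
    · show phi L (pi0 L (L.sharp a b)) ∈ Q
      rw [pi0_of_halo L _ (L.sharp_halo a b hae hbe), map_zero]; exact Q.zero_mem
    · show pi1 L (L.sharp a b) ∈ Q
      rw [pi1_sharp L a b hae hbe]
      have hma : mk1 L a hae ∈ Q := by rw [← pi1_of_halo L a hae]; exact ha1
      exact Q.mul_mem_right _ hma
  · intro h
    have he : L.e ∈ {u : U | phi L (pi0 L u) ∈ Q ∧ pi1 L u ∈ Q} := by rw [h]; trivial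
    have h1 : phi L (pi0 L L.e) ∈ Q := he.1
    rw [pi0_e, map_one] at h1
    exact Qprime.ne_top ((Ideal.eq_top_iff_one Q).mpr h1)
  · intro x _ y _ hx hy hxy
    have h : phi L (pi0 L x) * phi L (pi0 L y) ∈ Q := by
      have h0 : phi L (pi0 L (x * y)) ∈ Q := hxy.1
      rwa [pi0_mul, map_mul] at h0
    rcases Qprime.mem_or_mem h with h' | h'
    · exact Or.inl ⟨h', by show pi1 L x ∈ Q; rw [pi1_of_mem0 L x hx]; exact Q.zero_mem⟩
    · exact Or.inr ⟨h', by show pi1 L y ∈ Q; rw [pi1_of_mem0 L y hy]; exact Q.zero_mem⟩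
  · intro x _ y _ hx hy hxy
    have h : phi L (pi0 L x) * pi1 L y ∈ Q := by
      have h0 : pi1 L (x * y) ∈ Q := hxy.2
      rwa [pi1_mul] at h0
    rcases Qprime.mem_or_mem h with h' | h'
    · exact Or.inl ⟨h', by show pi1 L x ∈ Q; rw [pi1_of_mem0 L x hx]; exact Q.zero_mem⟩
    · refine Or.inr ⟨?_, h'⟩
      show phi L (pi0 L y) ∈ Q
      rw [pi0_of_halo L y hy, map_zero]; exact Q.zero_mem
  · intro x _ y _ hx hy hxy
    have h : mk1 L x hx * mk1 L y hy ∈ Q := by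
      have h0 : pi1 L (L.sharp x y) ∈ Q := hxy.2
      rwa [pi1_sharp L x y hx hy] at h0
    rcases Qprime.mem_or_mem h with h' | h'
    · refine Or.inl ⟨?_, ?_⟩
      · show phi L (pi0 L x) ∈ Q
        rw [pi0_of_halo L x hx, map_zero]; exact Q.zero_mem
      · show pi1 L x ∈ Q
        rw [pi1_of_halo L x hx]; exact h'
    · refine Or.inr ⟨?_, ?_⟩
      · show phi L (pi0 L y) ∈ Q
        rw [pi0_of_halo L y hy, map_zero]; exact Q.zero_mem
      · show pi1 L y ∈ Q
        rw [pi1_of_halo L y hy]; exact h'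
  · ext r
    constructor
    · rintro ⟨⟨hq0, hq1⟩, hrR⟩
      have hre : r * L.e ∈ R := hR.mul_mem hrR hR.e_mem
      have hm : r - r * L.e ∈ R := by
        rw [sub_eq_add_neg]
        exact hR.add_mem hrR (hR.neg_mem hre)
      have h1 : r - r * L.e ∈ p := (hQ (pi1 L r) hm).mp hq1
      have hval : (phi L (pi0 L r)).1 ∈ R := hR.mul_mem hre hR.ls_mem
      have h0' : (r * L.e) * L.ls ∈ p := (hQ (phi L (pi0 L r)) hval).mp hq0
      have h0 : r * L.e ∈ p := by
        rcases hp.prime01 (r * L.e) hre L.ls hR.ls_mem (mul_e_mem0 L r) L.ls_halo h0' with h | h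
        · exact h
        · exact absurd h hls
      have : r = r * L.e + (r - r * L.e) := by abel
      rw [this]
      exact hp.add_mem h0 h1
    · intro hrp
      have hrR : r ∈ R := hp.subset hrp
      have hre : r * L.e ∈ R := hR.mul_mem hrR hR.e_mem
      have h0 : r * L.e ∈ p := hp.mul_right hrp L.e hR.e_mem
      have hm : r - r * L.e ∈ R := by
        rw [sub_eq_add_neg]
        exact hR.add_mem hrR (hR.neg_mem hre)
      have h1 : r - r * L.e ∈ p := by
        have : r = r * L.e + (r - r * L.e) := by abel
        have h2 := hp.add_mem hrp (hp.neg_mem h0)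
        rwa [← sub_eq_add_neg] at h2
      refine ⟨⟨?_, ?_⟩, hrR⟩
      · show phi L (pi0 L r) ∈ Q
        exact (hQ (phi L (pi0 L r)) (hR.mul_mem hre hR.ls_mem)).mpr
          (hp.mul_right h0 L.ls hR.ls_mem)
      · show pi1 L r ∈ Q
        exact (hQ (pi1 L r) hm).mpr h1

end Main

end LyingOverAux

open LyingOverAux

/-- Lying-Over Theorem for left commutative rngs: if `U` is graded
integral over the left commutative subrng `R`, then every Hu-Liu prime ideal `p` of `R`
is lain over by some Hu-Liu prime ideal `q` of `U`: `q ∩ R = p`. -/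
theorem lying_over {U : Type u} [NonUnitalRing U] (L : LeftCommRng U)
    (R : Set U) (hR : IsLCSubrng L R) (hint : GradedIntegral L R)
    (p : Set U) (hp : IsHLPrimeIn L R p) :
    ∃ q : Set U, IsHLPrimeIn L Set.univ q ∧ q ∩ R = p := by
  by_cases hls : L.ls ∈ p
  · haveI := isIntegral0 L R hR hint
    haveI := p0I_prime L R hR p hp
    obtain ⟨Q, -, Qprime, hQcomap⟩ :=
      Ideal.exists_ideal_over_prime_of_isIntegral (p0I L R hR p hp) ⊥ (comap_bot_le0 L R hR p hp)
    exact caseB L R hR p hp hls Q Qprime (transfer0 L R hR p hp Q hQcomap)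
  · haveI := isIntegral1 L R hR hint
    haveI := p1I_prime L R hR p hp hls
    obtain ⟨Q, -, Qprime, hQcomap⟩ :=
      Ideal.exists_ideal_over_prime_of_isIntegral (p1I L R hR p hp) ⊥ (comap_bot_le1 L R hR p hp)
    exact caseA L R hR p hp hls Q Qprime (transfer1 L R hR p hp Q hQcomap)
end

section
/- Let R be a left commutative subrng of a left commutative rng U with U graded integral over R, let p be a Hu-Liu prime ideal of R, and let q be a maximal element of the set of ideals J of U with J ∩ R ⊆ p. Then q ∩ R = p. -/
universe u

namespace LyingOver

universe v

variable {U : Type u} [NonUnitalRing U] (L : LeftCommRng U)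

lemma halo_mul {a : U} (h : a * L.e = 0) (y : U) : a * y = 0 := by
  have h2 : a * (L.e * y) = (a * L.e) * y := (mul_assoc a L.e y).symm
  rw [L.e_mul, h, zero_mul] at h2
  exact h2

lemma e_e : L.e * L.e = L.e := L.e_mul L.e

lemma comp0 (u : U) : (u * L.e) * L.e = u * L.e := by rw [mul_assoc, e_e]

lemma comp1 (u : U) : (u - u * L.e) * L.e = 0 := by rw [sub_mul, comp0, sub_self]

lemma zero_halo : (0 : U) * L.e = 0 := zero_mul _

lemma sharp_zero_right {a : U} (h : a * L.e = 0) : L.sharp a 0 = 0 := by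
  have h2 := L.sharp_add a 0 0 h (zero_halo L) (zero_halo L)
  rw [add_zero] at h2
  exact add_eq_left.mp h2.symm

lemma sharp_zero_left {a : U} (h : a * L.e = 0) : L.sharp 0 a = 0 := by
  rw [L.sharp_comm 0 a (zero_halo L) h, sharp_zero_right L h]

lemma u0_mul_comm {a b : U} (ha : a * L.e = a) (hb : b * L.e = b) : a * b = b * a := by
  calc a * b = a * (b * L.e) := by rw [hb]
    _ = a * b * L.e := by rw [mul_assoc]
    _ = b * a * L.e := L.left_comm a b L.e
    _ = b * (a * L.e) := by rw [mul_assoc]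
    _ = b * a := by rw [ha]

/-- The even part `U₀` as a commutative ring. -/
structure U0 (L : LeftCommRng U) : Type u where
  val : U
  prop : val * L.e = val

/-- The halo `U₁` as a commutative ring under `♯`. -/
structure U1 (L : LeftCommRng U) : Type u where
  val : U
  prop : val * L.e = 0

@[ext] lemma U0.ext' {a b : U0 L} (h : a.val = b.val) : a = b := by
  cases a; cases b; cases h; rfl

@[ext] lemma U1.ext' {a b : U1 L} (h : a.val = b.val) : a = b := by
  cases a; cases b; cases h; rfl

instance : Add (U0 L) := ⟨fun a b => ⟨a.val + b.val, by rw [add_mul, a.prop, b.prop]⟩⟩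
instance : Zero (U0 L) := ⟨⟨0, zero_mul _⟩⟩
instance : Neg (U0 L) := ⟨fun a => ⟨-a.val, by rw [neg_mul, a.prop]⟩⟩
instance : Mul (U0 L) := ⟨fun a b => ⟨a.val * b.val, by rw [mul_assoc, b.prop]⟩⟩
instance : One (U0 L) := ⟨⟨L.e, e_e L⟩⟩

instance : AddCommGroup (U0 L) where
  add_assoc a b c := by ext; exact add_assoc _ _ _
  zero_add a := by ext; exact zero_add _
  add_zero a := by ext; exact add_zero _
  add_comm a b := by ext; exact add_comm _ _
  neg_add_cancel a := by ext; exact neg_add_cancel _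
  nsmul := nsmulRec
  zsmul := zsmulRec

instance : CommRing (U0 L) where
  __ := (inferInstance : AddCommGroup (U0 L))
  left_distrib a b c := by ext; exact mul_add _ _ _
  right_distrib a b c := by ext; exact add_mul _ _ _
  zero_mul a := by ext; exact zero_mul _
  mul_zero a := by ext; exact mul_zero _
  mul_assoc a b c := by ext; exact mul_assoc _ _ _
  one_mul a := by ext; exact L.e_mul _
  mul_one a := by ext; exact a.prop
  mul_comm a b := by ext; exact u0_mul_comm L a.prop b.prop

instance : Add (U1 L) := ⟨fun a b => ⟨a.val + b.val, by rw [add_mul, a.prop, b.prop, add_zero]⟩⟩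
instance : Zero (U1 L) := ⟨⟨0, zero_mul _⟩⟩
instance : Neg (U1 L) := ⟨fun a => ⟨-a.val, by rw [neg_mul, a.prop, neg_zero]⟩⟩
instance : Mul (U1 L) := ⟨fun a b => ⟨L.sharp a.val b.val, L.sharp_halo _ _ a.prop b.prop⟩⟩
instance : One (U1 L) := ⟨⟨L.ls, L.ls_halo⟩⟩

instance : AddCommGroup (U1 L) where
  add_assoc a b c := by ext; exact add_assoc _ _ _
  zero_add a := by ext; exact zero_add _
  add_zero a := by ext; exact add_zero _
  add_comm a b := by ext; exact add_comm _ _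
  neg_add_cancel a := by ext; exact neg_add_cancel _
  nsmul := nsmulRec
  zsmul := zsmulRec

instance : CommRing (U1 L) where
  __ := (inferInstance : AddCommGroup (U1 L))
  left_distrib a b c := by ext; exact L.sharp_add _ _ _ a.prop b.prop c.prop
  right_distrib a b c := by
    ext
    show L.sharp (a.val + b.val) c.val = L.sharp a.val c.val + L.sharp b.val c.val
    rw [L.sharp_comm _ _ (by rw [add_mul, a.prop, b.prop, add_zero]) c.prop,
      L.sharp_add _ _ _ c.prop a.prop b.prop, L.sharp_comm c.val a.val c.prop a.prop,
      L.sharp_comm c.val b.val c.prop b.prop]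
  zero_mul a := by ext; exact sharp_zero_left L a.prop
  mul_zero a := by ext; exact sharp_zero_right L a.prop
  mul_assoc a b c := by ext; exact L.sharp_assoc _ _ _ a.prop b.prop c.prop
  one_mul a := by ext; exact L.sharp_ls _ a.prop
  mul_one a := by
    ext
    show L.sharp a.val L.ls = a.val
    rw [L.sharp_comm a.val L.ls a.prop L.ls_halo]; exact L.sharp_ls _ a.prop
  mul_comm a b := by ext; exact L.sharp_comm _ _ a.prop b.prop

@[simp] lemma U0.val_add (a b : U0 L) : (a + b).val = a.val + b.val := rfl
@[simp] lemma U0.val_mul (a b : U0 L) : (a * b).val = a.val * b.val := rfl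
@[simp] lemma U0.val_zero : (0 : U0 L).val = 0 := rfl
@[simp] lemma U0.val_one : (1 : U0 L).val = L.e := rfl
@[simp] lemma U0.val_neg (a : U0 L) : (-a).val = -a.val := rfl
@[simp] lemma U0.val_sub (a b : U0 L) : (a - b).val = a.val - b.val := by
  rw [sub_eq_add_neg, sub_eq_add_neg]; rfl

@[simp] lemma U1.val_add (a b : U1 L) : (a + b).val = a.val + b.val := rfl
@[simp] lemma U1.val_mul (a b : U1 L) : (a * b).val = L.sharp a.val b.val := rfl
@[simp] lemma U1.val_zero : (0 : U1 L).val = 0 := rfl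
@[simp] lemma U1.val_one : (1 : U1 L).val = L.ls := rfl
@[simp] lemma U1.val_neg (a : U1 L) : (-a).val = -a.val := rfl
@[simp] lemma U1.val_sub (a b : U1 L) : (a - b).val = a.val - b.val := by
  rw [sub_eq_add_neg, sub_eq_add_neg]; rfl

@[simp] lemma U0.val_pow (a : U0 L) (n : ℕ) : (a ^ n).val = pw L.e a.val n := by
  induction n with
  | zero => rw [pow_zero]; rfl
  | succ n ih =>
      rw [pow_succ, mul_comm, U0.val_mul, ih]; rfl

@[simp] lemma U1.val_pow (a : U1 L) (n : ℕ) : (a ^ n).val = L.spow a.val n := by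
  induction n with
  | zero => rw [pow_zero]; rfl
  | succ n ih =>
      rw [pow_succ, mul_comm, U1.val_mul, ih]; rfl

/-- `val` as an additive group hom. -/
def U0.valHom : U0 L →+ U where
  toFun := U0.val
  map_zero' := rfl
  map_add' _ _ := rfl

def U1.valHom : U1 L →+ U where
  toFun := U1.val
  map_zero' := rfl
  map_add' _ _ := rfl

@[simp] lemma U0.val_sum {ι : Type v} (t : Finset ι) (f : ι → U0 L) :
    (∑ i ∈ t, f i).val = ∑ i ∈ t, (f i).val :=
  map_sum (U0.valHom L) f t

@[simp] lemma U1.val_sum {ι : Type v} (t : Finset ι) (f : ι → U1 L) :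
    (∑ i ∈ t, f i).val = ∑ i ∈ t, (f i).val :=
  map_sum (U1.valHom L) f t

/-- Multiplying an integral relation for `z` through by `xⁿ`. -/
lemma shift {A : Type v} [CommRing A] (n : ℕ) (z x : A) (a : ℕ → A)
    (h : z ^ n + ∑ i ∈ Finset.range n, a i * z ^ (n - 1 - i) = 0) :
    (x * z) ^ n + ∑ i ∈ Finset.range n, (x ^ (i + 1) * a i) * (x * z) ^ (n - 1 - i) = 0 := by
  have h2 : x ^ n * (z ^ n + ∑ i ∈ Finset.range n, a i * z ^ (n - 1 - i)) = 0 := by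
    rw [h, mul_zero]
  rw [mul_add, Finset.mul_sum] at h2
  rw [← h2]
  congr 1
  · rw [mul_pow]
  · refine Finset.sum_congr rfl fun i hi => ?_
    have hi' : i + 1 + (n - 1 - i) = n := by
      have := Finset.mem_range.mp hi; omega
    have hx : x ^ n = x ^ (i + 1) * x ^ (n - 1 - i) := by rw [← pow_add, hi']
    rw [mul_pow, hx]; ring

/-- Integral relation for `r - s` with `s` in an absorbing subgroup `Q` gives
an integral-type relation for `r` modulo `Q`. -/
lemma modQ {A : Type v} [CommRing A] (Q : AddSubgroup A)
    (habs : ∀ a ∈ Q, ∀ r : A, a * r ∈ Q) (n : ℕ) (r s : A) (hs : s ∈ Q) (b : ℕ → A)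
    (h : (r - s) ^ n + ∑ i ∈ Finset.range n, b i * (r - s) ^ (n - 1 - i) = 0) :
    r ^ n + ∑ i ∈ Finset.range n, b i * r ^ (n - 1 - i) ∈ Q := by
  have key : ∀ k : ℕ, r ^ k - (r - s) ^ k ∈ Q := by
    intro k
    induction k with
    | zero => simpa using Q.zero_mem
    | succ k ih =>
        have hk : r ^ (k + 1) - (r - s) ^ (k + 1)
            = (r - s) * (r ^ k - (r - s) ^ k) + s * r ^ k := by ring
        rw [hk]
        exact Q.add_mem (by rw [mul_comm]; exact habs _ ih _) (habs s hs _)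
  have heq : r ^ n + ∑ i ∈ Finset.range n, b i * r ^ (n - 1 - i)
      = ((r - s) ^ n + ∑ i ∈ Finset.range n, b i * (r - s) ^ (n - 1 - i))
        + ((r ^ n - (r - s) ^ n)
          + ∑ i ∈ Finset.range n, b i * (r ^ (n - 1 - i) - (r - s) ^ (n - 1 - i))) := by
    simp only [mul_sub]
    rw [Finset.sum_sub_distrib]
    ring
  rw [heq, h, zero_add]
  exact Q.add_mem (key n)
    (AddSubgroup.sum_mem Q fun i _ => by rw [mul_comm]; exact habs _ (key _) _)

section

variable {R p : Set U}

lemma zero_mem_R (hR : IsLCSubrng L R) : (0 : U) ∈ R := by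
  have := hR.add_mem hR.e_mem (hR.neg_mem hR.e_mem)
  rwa [add_neg_cancel] at this

lemma sub_mem_R (hR : IsLCSubrng L R) {a b : U} (ha : a ∈ R) (hb : b ∈ R) : a - b ∈ R := by
  rw [sub_eq_add_neg]; exact hR.add_mem ha (hR.neg_mem hb)

lemma pw_mem_R (hR : IsLCSubrng L R) {x : U} (hx : x ∈ R) : ∀ n, pw L.e x n ∈ R
  | 0 => hR.e_mem
  | n + 1 => hR.mul_mem hx (pw_mem_R hR hx n)

lemma pw_u0 {x : U} (hx : x * L.e = x) : ∀ n, pw L.e x n * L.e = pw L.e x n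
  | 0 => e_e L
  | n + 1 => by
      show (x * pw L.e x n) * L.e = x * pw L.e x n
      rw [mul_assoc, pw_u0 hx n]

lemma spow_halo {x : U} (hx : x * L.e = 0) : ∀ n, L.spow x n * L.e = 0
  | 0 => L.ls_halo
  | n + 1 => L.sharp_halo _ _ hx (spow_halo hx n)

lemma spow_mem_R (hR : IsLCSubrng L R) {x : U} (hx : x ∈ R) (hx1 : x * L.e = 0) :
    ∀ n, L.spow x n ∈ R
  | 0 => hR.ls_mem
  | n + 1 => hR.sharp_mem hx (spow_mem_R hR hx hx1 n) hx1 (spow_halo L hx1 n)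

lemma spow_mem_p (hR : IsLCSubrng L R) (hp : IsHLPrimeIn L R p) {x : U} (hx : x ∈ p)
    (hx1 : x * L.e = 0) : ∀ m, L.spow x (m + 1) ∈ p := fun m =>
  hp.sharp_mem hx hx1 _ (spow_mem_R L hR (hp.subset hx) hx1 m) (spow_halo L hx1 m)

lemma descend0 (hR : IsLCSubrng L R) (hp : IsHLPrimeIn L R p) {x : U} (hx : x ∈ R)
    (hx0 : x * L.e = x) : ∀ n, pw L.e x (n + 1) ∈ p → x ∈ p := by
  intro n
  induction n with
  | zero => intro h; rwa [show pw L.e x 1 = x * L.e from rfl, hx0] at h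
  | succ n ih =>
      intro h
      rcases hp.prime00 x hx (pw L.e x (n + 1)) (pw_mem_R L hR hx (n + 1)) hx0
        (pw_u0 L hx0 (n + 1)) h with h' | h'
      · exact h'
      · exact ih h'

lemma descend1 (hR : IsLCSubrng L R) (hp : IsHLPrimeIn L R p) {x : U} (hx : x ∈ R)
    (hx1 : x * L.e = 0) : ∀ n, L.spow x (n + 1) ∈ p → x ∈ p := by
  intro n
  induction n with
  | zero =>
      intro h
      have : L.spow x 1 = x := by
        show L.sharp x L.ls = x
        rw [L.sharp_comm x L.ls hx1 L.ls_halo, L.sharp_ls x hx1]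
      rwa [this] at h
  | succ n ih =>
      intro h
      rcases hp.prime11 x hx (L.spow x (n + 1)) (spow_mem_R L hR hx hx1 (n + 1)) hx1
        (spow_halo L hx1 (n + 1)) h with h' | h'
      · exact h'
      · exact ih h'

lemma sum_mem_set {ι : Type v} (S : Set U) (h0 : (0 : U) ∈ S)
    (hadd : ∀ {a b : U}, a ∈ S → b ∈ S → a + b ∈ S) (t : Finset ι) (f : ι → U)
    (hf : ∀ i ∈ t, f i ∈ S) : ∑ i ∈ t, f i ∈ S :=
  Finset.sum_induction f (· ∈ S) (fun _ _ ha hb => hadd ha hb) h0 hf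

end

section

variable {R p q : Set U}

lemma sharp_add_left {a b c : U} (ha : a * L.e = 0) (hb : b * L.e = 0) (hc : c * L.e = 0) :
    L.sharp (a + b) c = L.sharp a c + L.sharp b c := by
  have hab : (a + b) * L.e = 0 := by rw [add_mul, ha, hb, add_zero]
  rw [L.sharp_comm _ _ hab hc, L.sharp_add _ _ _ hc ha hb,
    L.sharp_comm c a hc ha, L.sharp_comm c b hc hb]

lemma ideal_sub (hq : IsLCIdealIn L Set.univ q) {a b : U} (ha : a ∈ q) (hb : b ∈ q) :
    a - b ∈ q := by
  rw [sub_eq_add_neg]; exact hq.add_mem ha (hq.neg_mem hb)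

/-- The additive subgroup of `U0` corresponding to the ideal `q`. -/
def Q0 (hq : IsLCIdealIn L Set.univ q) : AddSubgroup (U0 L) where
  carrier := {a | a.val ∈ q}
  zero_mem' := hq.zero_mem
  add_mem' ha hb := hq.add_mem ha hb
  neg_mem' ha := hq.neg_mem ha

/-- The additive subgroup of `U1` corresponding to the ideal `q`. -/
def Q1 (hq : IsLCIdealIn L Set.univ q) : AddSubgroup (U1 L) where
  carrier := {a | a.val ∈ q}
  zero_mem' := hq.zero_mem
  add_mem' ha hb := hq.add_mem ha hb
  neg_mem' ha := hq.neg_mem ha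

lemma Q0_abs (hq : IsLCIdealIn L Set.univ q) :
    ∀ a ∈ Q0 L hq, ∀ w : U0 L, a * w ∈ Q0 L hq := fun a ha w =>
  hq.mul_right ha w.val trivial

lemma Q1_abs (hq : IsLCIdealIn L Set.univ q) :
    ∀ a ∈ Q1 L hq, ∀ w : U1 L, a * w ∈ Q1 L hq := fun a ha w =>
  hq.sharp_mem ha a.prop w.val trivial w.prop

/-- The key halo-part reduction: if `r ≡ x·u₁ mod q` with `x ∈ p` and `r, x` halo
elements of `R`, actually we state it with an arbitrary `U1`-multiplier. -/
lemma halo_reduction (hR : IsLCSubrng L R) (hp : IsHLPrimeIn L R p)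
    (hq : IsLCIdealIn L Set.univ q) (hqp : q ∩ R ⊆ p)
    {r1 s1 w : U} (hr1R : r1 ∈ R) (hr1 : r1 * L.e = 0) (hs1q : s1 ∈ q) (hs1 : s1 * L.e = 0)
    (hwp : w ∈ p) (hw : w * L.e = 0)
    {v : U} (hv : v * L.e = 0) (hvint : Integral1 L R v)
    (heq : L.sharp w v = r1 - s1) : r1 ∈ p := by
  obtain ⟨n, hn, a, ha, hrel⟩ := hvint
  set v' : U1 L := ⟨v, hv⟩ with hv'
  set w' : U1 L := ⟨w, hw⟩ with hw'
  set r' : U1 L := ⟨r1, hr1⟩ with hr'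
  set s' : U1 L := ⟨s1, hs1⟩ with hs'
  set A : ℕ → U1 L := fun i => ⟨a i, (ha i).2⟩ with hA
  have hrel' : v' ^ n + ∑ i ∈ Finset.range n, A i * v' ^ (n - 1 - i) = 0 := by
    apply U1.ext' L
    simpa [hv', hA] using hrel
  have hsh := shift n v' w' A hrel'
  have hwv : w' * v' = r' - s' := by
    apply U1.ext' L
    simpa [hw', hv', hr', hs'] using heq
  rw [hwv] at hsh
  have hmod := modQ (Q1 L hq) (Q1_abs L hq) n r' s' hs1q _ hsh
  have hTval : (r' ^ n + ∑ i ∈ Finset.range n,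
      (w' ^ (i + 1) * A i) * r' ^ (n - 1 - i)).val
      = L.spow r1 n + ∑ i ∈ Finset.range n,
        L.sharp (L.sharp (L.spow w (i + 1)) (a i)) (L.spow r1 (n - 1 - i)) := by
    simp [hr', hw', hA]
  have hTq : L.spow r1 n + ∑ i ∈ Finset.range n,
      L.sharp (L.sharp (L.spow w (i + 1)) (a i)) (L.spow r1 (n - 1 - i)) ∈ q := by
    rw [← hTval]; exact hmod
  have hwR : w ∈ R := hp.subset hwp
  have hcoe : ∀ i, L.sharp (L.spow w (i + 1)) (a i) ∈ p := fun i =>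
    hp.sharp_mem (spow_mem_p L hR hp hwp hw i) (spow_halo L hw (i + 1)) (a i)
      (ha i).1 (ha i).2
  have hsummand : ∀ i, L.sharp (L.sharp (L.spow w (i + 1)) (a i))
      (L.spow r1 (n - 1 - i)) ∈ p := fun i =>
    hp.sharp_mem (hcoe i) (L.sharp_halo _ _ (spow_halo L hw (i + 1)) (ha i).2)
      _ (spow_mem_R L hR hr1R hr1 _) (spow_halo L hr1 _)
  have hTR : L.spow r1 n + ∑ i ∈ Finset.range n,
      L.sharp (L.sharp (L.spow w (i + 1)) (a i)) (L.spow r1 (n - 1 - i)) ∈ R :=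
    hR.add_mem (spow_mem_R L hR hr1R hr1 n)
      (sum_mem_set R (zero_mem_R L hR) hR.add_mem _ _ fun i _ => hp.subset (hsummand i))
  have hTp : _ ∈ p := hqp ⟨hTq, hTR⟩
  have hsump : ∑ i ∈ Finset.range n,
      L.sharp (L.sharp (L.spow w (i + 1)) (a i)) (L.spow r1 (n - 1 - i)) ∈ p :=
    sum_mem_set p hp.zero_mem hp.add_mem _ _ fun i _ => hsummand i
  have hpowp : L.spow r1 n ∈ p := by
    have h1 := hp.add_mem hTp (hp.neg_mem hsump)
    rwa [add_neg_cancel_right] at h1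
  obtain ⟨m, rfl⟩ : ∃ m, n = m + 1 := ⟨n - 1, by omega⟩
  exact descend1 L hR hp hr1R hr1 m hpowp


/-- The key even-part reduction. -/
lemma even_reduction (hR : IsLCSubrng L R) (hp : IsHLPrimeIn L R p)
    (hq : IsLCIdealIn L Set.univ q) (hqp : q ∩ R ⊆ p)
    {r0 s0 x : U} (hr0R : r0 ∈ R) (hr0 : r0 * L.e = r0) (hs0q : s0 ∈ q) (hs0 : s0 * L.e = s0)
    (hxp : x ∈ p) (hx0 : x * L.e = x)
    {u0 : U} (hu0 : u0 * L.e = u0) (hu0int : Integral0 L R u0)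
    (heq : x * u0 = r0 - s0) : r0 ∈ p := by
  obtain ⟨n, hn, a, ha, hrel⟩ := hu0int
  set v' : U0 L := ⟨u0, hu0⟩ with hv'
  set w' : U0 L := ⟨x, hx0⟩ with hw'
  set r' : U0 L := ⟨r0, hr0⟩ with hr'
  set s' : U0 L := ⟨s0, hs0⟩ with hs'
  set A : ℕ → U0 L := fun i => ⟨a i, (ha i).2⟩ with hA
  have hrel' : v' ^ n + ∑ i ∈ Finset.range n, A i * v' ^ (n - 1 - i) = 0 := by
    apply U0.ext' L
    simpa [hv', hA] using hrel
  have hsh := shift n v' w' A hrel'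
  have hwv : w' * v' = r' - s' := by
    apply U0.ext' L
    simpa [hw', hv', hr', hs'] using heq
  rw [hwv] at hsh
  have hmod := modQ (Q0 L hq) (Q0_abs L hq) n r' s' hs0q _ hsh
  have hTval : (r' ^ n + ∑ i ∈ Finset.range n,
      (w' ^ (i + 1) * A i) * r' ^ (n - 1 - i)).val
      = pw L.e r0 n + ∑ i ∈ Finset.range n,
        (pw L.e x (i + 1) * a i) * pw L.e r0 (n - 1 - i) := by
    simp [hr', hw', hA]
  have hTq : pw L.e r0 n + ∑ i ∈ Finset.range n,
      (pw L.e x (i + 1) * a i) * pw L.e r0 (n - 1 - i) ∈ q := by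
    rw [← hTval]; exact hmod
  have hxR : x ∈ R := hp.subset hxp
  have hcoe : ∀ i, pw L.e x (i + 1) * a i ∈ p := fun i =>
    hp.mul_right (hp.mul_right hxp _ (pw_mem_R L hR hxR i)) _ (ha i).1
  have hsummand : ∀ i, (pw L.e x (i + 1) * a i) * pw L.e r0 (n - 1 - i) ∈ p := fun i =>
    hp.mul_right (hcoe i) _ (pw_mem_R L hR hr0R _)
  have hTR : pw L.e r0 n + ∑ i ∈ Finset.range n,
      (pw L.e x (i + 1) * a i) * pw L.e r0 (n - 1 - i) ∈ R :=
    hR.add_mem (pw_mem_R L hR hr0R n)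
      (sum_mem_set R (zero_mem_R L hR) hR.add_mem _ _ fun i _ => hp.subset (hsummand i))
  have hTp : _ ∈ p := hqp ⟨hTq, hTR⟩
  have hsump : ∑ i ∈ Finset.range n,
      (pw L.e x (i + 1) * a i) * pw L.e r0 (n - 1 - i) ∈ p :=
    sum_mem_set p hp.zero_mem hp.add_mem _ _ fun i _ => hsummand i
  have hpowp : pw L.e r0 n ∈ p := by
    have h1 := hp.add_mem hTp (hp.neg_mem hsump)
    rwa [add_neg_cancel_right] at h1
  obtain ⟨m, rfl⟩ : ∃ m, n = m + 1 := ⟨n - 1, by omega⟩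
  exact descend0 L hR hp hr0R hr0 m hpowp


lemma sharp_neg_left {a b : U} (ha : a * L.e = 0) (hb : b * L.e = 0) :
    L.sharp (-a) b = -(L.sharp a b) := by
  have hna : (-a) * L.e = 0 := by rw [neg_mul, ha, neg_zero]
  have h2 := sharp_add_left L ha hna hb
  rw [add_neg_cancel, sharp_zero_left L hb] at h2
  exact (neg_eq_of_add_eq_zero_right h2.symm).symm

lemma mem0 (hR : IsLCSubrng L R) (hint : GradedIntegral L R) (hp : IsHLPrimeIn L R p)
    (hq : IsLCIdealIn L Set.univ q) (hqp : q ∩ R ⊆ p)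
    (hmax : ∀ J : Set U, IsLCIdealIn L Set.univ J → J ∩ R ⊆ p → q ⊆ J → J = q)
    {x : U} (hxp : x ∈ p) (hx0 : x * L.e = x) : x ∈ q := by
  set J : Set U := {t | ∃ s ∈ q, ∃ u : U, t = s + x * u} with hJdef
  have hJ : IsLCIdealIn L Set.univ J := by
    refine ⟨fun _ _ => trivial, ?_, ?_, ?_, ?_, ?_, ?_⟩
    · exact ⟨0, hq.zero_mem, 0, by rw [mul_zero, add_zero]⟩
    · rintro a b ⟨s, hs, u, rfl⟩ ⟨s', hs', u', rfl⟩
      exact ⟨s + s', hq.add_mem hs hs', u + u', by rw [mul_add]; abel⟩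
    · rintro a ⟨s, hs, u, rfl⟩
      exact ⟨-s, hq.neg_mem hs, -u, by rw [mul_neg]; abel⟩
    · rintro a ⟨s, hs, u, rfl⟩ r -
      exact ⟨s * r, hq.mul_right hs r trivial, u * r, by rw [add_mul, mul_assoc]⟩
    · rintro a ⟨s, hs, u, rfl⟩ r -
      refine ⟨r * s, hq.mul_left hs r trivial, r * u, ?_⟩
      rw [mul_add, ← mul_assoc, L.left_comm r x u, mul_assoc]
    · rintro a ⟨s, hs, u, rfl⟩ hae b - hbe
      rw [add_mul, mul_assoc] at hae
      have hxue : (x * (u - u * L.e)) * L.e = 0 := by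
        rw [mul_assoc, comp1 L u, mul_zero]
      have hrep : s + x * u = (s - s * L.e) + x * (u - u * L.e) := by
        have h3 : (s - s * L.e) + x * (u - u * L.e)
            = (s + x * u) - (s * L.e + x * (u * L.e)) := by rw [mul_sub]; abel
        rw [h3, hae, sub_zero]
      have hs'q : s - s * L.e ∈ q := ideal_sub L hq hs (hq.mul_right hs L.e trivial)
      refine ⟨L.sharp (s - s * L.e) b, hq.sharp_mem hs'q (comp1 L s) b trivial hbe,
        L.sharp (u - u * L.e) b, ?_⟩
      rw [hrep, sharp_add_left L (comp1 L s) hxue hbe,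
        L.triassoc x _ b (comp1 L u) hbe]
  have hqJ : q ⊆ J := fun s hs => ⟨s, hs, 0, by rw [mul_zero, add_zero]⟩
  have hJR : J ∩ R ⊆ p := by
    rintro r ⟨⟨s, hs, u, hru⟩, hrR⟩
    have hr0p : r * L.e ∈ p := by
      apply even_reduction L hR hp hq hqp (hR.mul_mem hrR hR.e_mem) (comp0 L r)
        (hq.mul_right hs L.e trivial) (comp0 L s) hxp hx0 (comp0 L u) (hint u).1
      rw [hru, add_mul, mul_assoc]; abel
    have hr1p : r - r * L.e ∈ p := by
      apply halo_reduction L hR hp hq hqp (sub_mem_R L hR hrR (hR.mul_mem hrR hR.e_mem))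
        (comp1 L r) (ideal_sub L hq hs (hq.mul_right hs L.e trivial)) (comp1 L s)
        (hp.mul_right hxp L.ls hR.ls_mem) (by rw [mul_assoc, L.ls_halo, mul_zero])
        (comp1 L u) (hint u).2
      rw [L.triassoc x L.ls _ L.ls_halo (comp1 L u), L.sharp_ls _ (comp1 L u), hru,
        mul_sub, add_mul, mul_assoc]
      abel
    have h4 := hp.add_mem hr0p hr1p
    rwa [show r * L.e + (r - r * L.e) = r from by abel] at h4
  have hJq : J = q := hmax J hJ hJR hqJ
  have hxJ : x ∈ J := ⟨0, hq.zero_mem, L.e, by rw [hx0, zero_add]⟩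
  rw [← hJq]; exact hxJ

lemma mem1 (hR : IsLCSubrng L R) (hint : GradedIntegral L R) (hp : IsHLPrimeIn L R p)
    (hq : IsLCIdealIn L Set.univ q) (hqp : q ∩ R ⊆ p)
    (hmax : ∀ J : Set U, IsLCIdealIn L Set.univ J → J ∩ R ⊆ p → q ⊆ J → J = q)
    {x : U} (hxp : x ∈ p) (hx1 : x * L.e = 0) : x ∈ q := by
  set J : Set U := {t | ∃ s ∈ q, ∃ v : U, v * L.e = 0 ∧ t = s + L.sharp v x} with hJdef
  have hJ : IsLCIdealIn L Set.univ J := by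
    refine ⟨fun _ _ => trivial, ?_, ?_, ?_, ?_, ?_, ?_⟩
    · exact ⟨0, hq.zero_mem, 0, zero_mul _, by rw [sharp_zero_left L hx1, add_zero]⟩
    · rintro a b ⟨s, hs, v, hv, rfl⟩ ⟨s', hs', v', hv', rfl⟩
      refine ⟨s + s', hq.add_mem hs hs', v + v', by rw [add_mul, hv, hv', add_zero], ?_⟩
      rw [sharp_add_left L hv hv' hx1]; abel
    · rintro a ⟨s, hs, v, hv, rfl⟩
      refine ⟨-s, hq.neg_mem hs, -v, by rw [neg_mul, hv, neg_zero], ?_⟩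
      rw [sharp_neg_left L hv hx1]; abel
    · rintro a ⟨s, hs, v, hv, rfl⟩ r -
      refine ⟨s * r, hq.mul_right hs r trivial, 0, zero_mul _, ?_⟩
      rw [add_mul, halo_mul L (L.sharp_halo v x hv hx1) r, sharp_zero_left L hx1,
        add_zero]
    · rintro a ⟨s, hs, v, hv, rfl⟩ r -
      refine ⟨r * s, hq.mul_left hs r trivial, r * v,
        by rw [mul_assoc, hv, mul_zero], ?_⟩
      rw [mul_add, L.triassoc r v x hv hx1]
    · rintro a ⟨s, hs, v, hv, rfl⟩ hae b - hbe
      have hse : s * L.e = 0 := by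
        rw [add_mul, L.sharp_halo v x hv hx1, add_zero] at hae
        exact hae
      refine ⟨L.sharp s b, hq.sharp_mem hs hse b trivial hbe, L.sharp v b,
        L.sharp_halo v b hv hbe, ?_⟩
      rw [sharp_add_left L hse (L.sharp_halo v x hv hx1) hbe]
      congr 1
      rw [L.sharp_assoc v x b hv hx1 hbe, L.sharp_comm x b hx1 hbe,
        ← L.sharp_assoc v b x hv hbe hx1]
  have hqJ : q ⊆ J := fun s hs =>
    ⟨s, hs, 0, zero_mul _, by rw [sharp_zero_left L hx1, add_zero]⟩
  have hJR : J ∩ R ⊆ p := by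
    rintro r ⟨⟨s, hs, v, hv, hrv⟩, hrR⟩
    have hre : r * L.e = s * L.e := by
      rw [hrv, add_mul, L.sharp_halo v x hv hx1, add_zero]
    have hr0p : r * L.e ∈ p :=
      hqp ⟨by rw [hre]; exact hq.mul_right hs L.e trivial, hR.mul_mem hrR hR.e_mem⟩
    have hvint : Integral1 L R v := by
      have h2 := (hint v).2
      rwa [hv, sub_zero] at h2
    have hr1p : r - r * L.e ∈ p := by
      apply halo_reduction L hR hp hq hqp (sub_mem_R L hR hrR (hR.mul_mem hrR hR.e_mem))
        (comp1 L r) (ideal_sub L hq hs (hq.mul_right hs L.e trivial)) (comp1 L s)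
        hxp hx1 hv hvint
      rw [L.sharp_comm x v hx1 hv, hre, hrv]
      abel
    have h4 := hp.add_mem hr0p hr1p
    rwa [show r * L.e + (r - r * L.e) = r from by abel] at h4
  have hJq : J = q := hmax J hJ hJR hqJ
  have hxJ : x ∈ J := ⟨0, hq.zero_mem, L.ls, L.ls_halo, by rw [L.sharp_ls x hx1, zero_add]⟩
  rw [← hJq]; exact hxJ

end

end LyingOver

/-- a maximal element `q` of `{J ideal of U : J ∩ R ⊆ p}` satisfies
`q ∩ R = p` when `U` is graded integral over `R` and `p` is Hu-Liu prime in `R`. -/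
theorem maximal_ideal_lies_over {U : Type u} [NonUnitalRing U] (L : LeftCommRng U)
    (R : Set U) (hR : IsLCSubrng L R) (hint : GradedIntegral L R)
    (p : Set U) (hp : IsHLPrimeIn L R p)
    (q : Set U) (hq : IsLCIdealIn L Set.univ q) (hqp : q ∩ R ⊆ p)
    (hmax : ∀ J : Set U, IsLCIdealIn L Set.univ J → J ∩ R ⊆ p → q ⊆ J → J = q) :
    q ∩ R = p := by
  refine Set.Subset.antisymm hqp fun x hxp => ⟨?_, hp.subset hxp⟩
  have hx0q : x * L.e ∈ q :=
    LyingOver.mem0 L hR hint hp hq hqp hmax (hp.mul_right hxp L.e hR.e_mem)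
      (LyingOver.comp0 L x)
  have hx1p : x - x * L.e ∈ p := by
    rw [sub_eq_add_neg]
    exact hp.add_mem hxp (hp.neg_mem (hp.mul_right hxp L.e hR.e_mem))
  have hx1q : x - x * L.e ∈ q :=
    LyingOver.mem1 L hR hint hp hq hqp hmax hx1p (LyingOver.comp1 L x)
  have h2 := hq.add_mem hx0q hx1q
  rwa [show x * L.e + (x - x * L.e) = x from by abel] at h2
end

section
/- Let R be a left commutative subrng of a left commutative rng U with U graded integral over R, p a Hu-Liu prime ideal of R, and q a maximal element of {J ideal of U : J ∩ R ⊆ p} satisfying q ∩ R = p. If x₀, y₀ ∈ U₀ \ q₀, then x₀y₀ ∉ q₀, where U₀ = U·1ℓ and q₀ = q ∩ U₀. -/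
universe u

section Aux
variable {U : Type u} [NonUnitalRing U]

lemma halo_kill (L : LeftCommRng U) {a : U} (ha : a * L.e = 0) (w : U) : a * w = 0 := by
  have h : a * w = a * L.e * w := by rw [mul_assoc, L.e_mul]
  rw [h, ha, zero_mul]

lemma sharp_add_left (L : LeftCommRng U) {a b c : U} (ha : a * L.e = 0) (hb : b * L.e = 0)
    (hc : c * L.e = 0) : L.sharp (a + b) c = L.sharp a c + L.sharp b c := by
  have hab : (a + b) * L.e = 0 := by rw [add_mul, ha, hb, add_zero]
  rw [L.sharp_comm _ _ hab hc, L.sharp_add _ _ _ hc ha hb, L.sharp_comm _ _ hc ha,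
    L.sharp_comm _ _ hc hb]

lemma Jideal (L : LeftCommRng U) (q : Set U) (hq : IsLCIdealIn L Set.univ q)
    {x : U} (hx : x * L.e = x) :
    IsLCIdealIn L Set.univ {w | ∃ t ∈ q, ∃ u, w = t + x * u} := by
  have hee : L.e * L.e = L.e := L.e_mul L.e
  constructor
  · intro w _; trivial
  · exact ⟨0, hq.zero_mem, 0, by rw [mul_zero, add_zero]⟩
  · rintro a b ⟨t, ht, u, rfl⟩ ⟨s, hs, v, rfl⟩
    exact ⟨t + s, hq.add_mem ht hs, u + v, by rw [mul_add]; abel⟩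
  · rintro a ⟨t, ht, u, rfl⟩
    exact ⟨-t, hq.neg_mem ht, -u, by rw [mul_neg]; abel⟩
  · rintro a ⟨t, ht, u, rfl⟩ r -
    exact ⟨t * r, hq.mul_right ht r trivial, u * r, by rw [add_mul, mul_assoc]⟩
  · rintro a ⟨t, ht, u, rfl⟩ r -
    refine ⟨r * t, hq.mul_left ht r trivial, r * u, ?_⟩
    rw [mul_add, ← mul_assoc, L.left_comm, mul_assoc]
  · rintro a ⟨t, ht, u, rfl⟩ hae b - hbe
    have hue : u * L.e * L.e = u * L.e := by rw [mul_assoc, hee]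
    have hhe : (u - u * L.e) * L.e = 0 := by rw [sub_mul, hue, sub_self]
    have hxue : x * (u * L.e) ∈ q := by
      have h2 : t * L.e + x * u * L.e = 0 := by rw [← add_mul, hae]
      have h1 : x * (u * L.e) = -(t * L.e) := by
        rw [← mul_assoc]; exact eq_neg_of_add_eq_zero_right h2
      rw [h1]; exact hq.neg_mem (hq.mul_right ht L.e trivial)
    have ht' : t + x * (u * L.e) ∈ q := hq.add_mem ht hxue
    have ht'e : (t + x * (u * L.e)) * L.e = 0 := by
      have h3 : (t + x * (u * L.e)) * L.e = (t + x * u) * L.e := by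
        rw [add_mul, add_mul, mul_assoc x (u * L.e) L.e, mul_assoc x u L.e, hue]
      rw [h3, hae]
    have hxhe : (x * (u - u * L.e)) * L.e = 0 := by rw [mul_assoc, hhe, mul_zero]
    have hdec : t + x * u = (t + x * (u * L.e)) + x * (u - u * L.e) := by
      rw [mul_sub]; abel
    refine ⟨L.sharp (t + x * (u * L.e)) b, hq.sharp_mem ht' ht'e b trivial hbe,
      L.sharp (u - u * L.e) b, ?_⟩
    rw [hdec, sharp_add_left L ht'e hxhe hbe, L.triassoc x (u - u * L.e) b hhe hbe]

end Aux

/-- for the maximal `q` with `q ∩ R = p`, the complement of `q₀` in `U₀`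
is multiplicatively closed: `x₀, y₀ ∈ U₀ \ q₀ ⟹ x₀y₀ ∉ q₀`. -/

theorem maximal_ideal_zero_part_prime {U : Type u} [NonUnitalRing U] (L : LeftCommRng U)
    (R : Set U) (hR : IsLCSubrng L R) (hint : GradedIntegral L R)
    (p : Set U) (hp : IsHLPrimeIn L R p)
    (q : Set U) (hq : IsLCIdealIn L Set.univ q) (hqp : q ∩ R ⊆ p)
    (hmax : ∀ J : Set U, IsLCIdealIn L Set.univ J → J ∩ R ⊆ p → q ⊆ J → J = q)
    (hqR : q ∩ R = p) :
    ∀ x y : U, x * L.e = x → y * L.e = y → x ∉ q → y ∉ q → x * y ∉ q := by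
  intro x y hx hy hxq hyq hxy
  have hee : L.e * L.e = L.e := L.e_mul L.e
  have hqsubmem : ∀ {c d : U}, c ∈ q → d ∈ q → c - d ∈ q := by
    intro c d hc hd; rw [sub_eq_add_neg]; exact hq.add_mem hc (hq.neg_mem hd)
  have hyx : y * x ∈ q := by
    have h1 : y * x = x * y * L.e := by
      rw [← L.left_comm y x L.e, mul_assoc, hx]
    rw [h1]; exact hq.mul_right hxy L.e trivial
  have hJx := Jideal L q hq hx
  have hJy := Jideal L q hq hy
  have hnx : ¬ ({w | ∃ t ∈ q, ∃ u, w = t + x * u} ∩ R ⊆ p) := by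
    intro hsub
    have heq := hmax _ hJx hsub (fun t ht => ⟨t, ht, 0, by rw [mul_zero, add_zero]⟩)
    exact hxq (heq ▸ (⟨0, hq.zero_mem, L.e, by rw [hx, zero_add]⟩ :
      x ∈ {w | ∃ t ∈ q, ∃ u, w = t + x * u}))
  have hny : ¬ ({w | ∃ t ∈ q, ∃ u, w = t + y * u} ∩ R ⊆ p) := by
    intro hsub
    have heq := hmax _ hJy hsub (fun t ht => ⟨t, ht, 0, by rw [mul_zero, add_zero]⟩)
    exact hyq (heq ▸ (⟨0, hq.zero_mem, L.e, by rw [hy, zero_add]⟩ :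
      y ∈ {w | ∃ t ∈ q, ∃ u, w = t + y * u}))
  obtain ⟨a, ⟨haJ, haR⟩, hap⟩ := Set.not_subset.mp hnx
  obtain ⟨b, ⟨hbJ, hbR⟩, hbp⟩ := Set.not_subset.mp hny
  obtain ⟨t, ht, u, hau⟩ := haJ
  obtain ⟨s, hs, v, hbv⟩ := hbJ
  have hmix : ∀ (c d : U), (x * c) * (y * d) ∈ q := by
    intro c d
    have h1 : (x * c) * (y * d) = c * (x * y * d) := by
      rw [← mul_assoc, L.left_comm x c y, mul_assoc (c * x) y d, mul_assoc c x (y * d),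
        ← mul_assoc x y d]
    rw [h1]; exact hq.mul_left (hq.mul_right hxy d trivial) c trivial
  have hmix' : ∀ (c d : U), (y * c) * (x * d) ∈ q := by
    intro c d
    have h1 : (y * c) * (x * d) = c * (y * x * d) := by
      rw [← mul_assoc, L.left_comm y c x, mul_assoc (c * y) x d, mul_assoc c y (x * d),
        ← mul_assoc y x d]
    rw [h1]; exact hq.mul_left (hq.mul_right hyx d trivial) c trivial
  have hab : a * b ∈ q := by
    rw [hau, hbv, add_mul, mul_add (x * u) s (y * v)]
    exact hq.add_mem (hq.mul_right ht _ trivial)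
      (hq.add_mem (hq.mul_left hs _ trivial) (hmix u v))
  have hba : b * a ∈ q := by
    rw [hau, hbv, add_mul, mul_add (y * v) t (x * u)]
    exact hq.add_mem (hq.mul_right hs _ trivial)
      (hq.add_mem (hq.mul_left ht _ trivial) (hmix' v u))
  have ha0R : a * L.e ∈ R := hR.mul_mem haR hR.e_mem
  have hb0R : b * L.e ∈ R := hR.mul_mem hbR hR.e_mem
  have ha1R : a - a * L.e ∈ R := by
    rw [sub_eq_add_neg]; exact hR.add_mem haR (hR.neg_mem ha0R)
  have hb1R : b - b * L.e ∈ R := by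
    rw [sub_eq_add_neg]; exact hR.add_mem hbR (hR.neg_mem hb0R)
  have ha0e : (a * L.e) * L.e = a * L.e := by rw [mul_assoc, hee]
  have hb0e : (b * L.e) * L.e = b * L.e := by rw [mul_assoc, hee]
  have ha1e : (a - a * L.e) * L.e = 0 := by rw [sub_mul, ha0e, sub_self]
  have hb1e : (b - b * L.e) * L.e = 0 := by rw [sub_mul, hb0e, sub_self]
  -- (1) a0 * b0 ∈ p
  have h00 : (a * L.e) * (b * L.e) ∈ p := by
    have he1 : (a * L.e) * (b * L.e) = a * b * L.e := by
      rw [mul_assoc a L.e (b * L.e), L.e_mul (b * L.e), ← mul_assoc]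
    rw [← hqR]
    exact ⟨by rw [he1]; exact hq.mul_right hab L.e trivial, hR.mul_mem ha0R hb0R⟩
  -- helper: c0 * d1 = c*d - c*d*e when (c - c*e) is halo
  have hproj : ∀ c d : U, (c * L.e) * (d - d * L.e) = c * d - c * d * L.e := by
    intro c d
    have hc1e : (c - c * L.e) * L.e = 0 := by
      rw [sub_mul, mul_assoc, hee, sub_self]
    have hk : (c - c * L.e) * (d - d * L.e) = 0 := halo_kill L hc1e _
    have h2 := sub_mul c (c * L.e) (d - d * L.e)
    rw [hk] at h2
    have h3 : (c * L.e) * (d - d * L.e) = c * (d - d * L.e) :=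
      (sub_eq_zero.mp h2.symm).symm
    rw [h3, mul_sub, ← mul_assoc]
  -- (2) a0 * b1 ∈ p
  have h01 : (a * L.e) * (b - b * L.e) ∈ p := by
    rw [← hqR]
    refine ⟨?_, hR.mul_mem ha0R hb1R⟩
    rw [hproj a b]
    exact hqsubmem hab (hq.mul_right hab L.e trivial)
  -- (3) b0 * a1 ∈ p
  have h01' : (b * L.e) * (a - a * L.e) ∈ p := by
    rw [← hqR]
    refine ⟨?_, hR.mul_mem hb0R ha1R⟩
    rw [hproj b a]
    exact hqsubmem hba (hq.mul_right hba L.e trivial)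
  -- (4) sharp a1 b1 ∈ p
  have h11 : L.sharp (a - a * L.e) (b - b * L.e) ∈ p := by
    rw [← hqR]
    refine ⟨?_, hR.sharp_mem ha1R hb1R ha1e hb1e⟩
    -- decompose a1 = t1 + x*h, b1 = s1 + y*h'
    have hte : (t - t * L.e) * L.e = 0 := by
      rw [sub_mul, mul_assoc, hee, sub_self]
    have hse : (s - s * L.e) * L.e = 0 := by
      rw [sub_mul, mul_assoc, hee, sub_self]
    have hhe : (u - u * L.e) * L.e = 0 := by
      rw [sub_mul, mul_assoc, hee, sub_self]
    have hh'e : (v - v * L.e) * L.e = 0 := by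
      rw [sub_mul, mul_assoc, hee, sub_self]
    have ht1 : t - t * L.e ∈ q := hqsubmem ht (hq.mul_right ht L.e trivial)
    have hs1 : s - s * L.e ∈ q := hqsubmem hs (hq.mul_right hs L.e trivial)
    have hadec : a - a * L.e = (t - t * L.e) + x * (u - u * L.e) := by
      rw [hau, mul_sub, add_mul, mul_assoc x u L.e]; abel
    have hbdec : b - b * L.e = (s - s * L.e) + y * (v - v * L.e) := by
      rw [hbv, mul_sub, add_mul, mul_assoc y v L.e]; abel
    have hxhe : (x * (u - u * L.e)) * L.e = 0 := by rw [mul_assoc, hhe, mul_zero]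
    have hyh'e : (y * (v - v * L.e)) * L.e = 0 := by rw [mul_assoc, hh'e, mul_zero]
    rw [hadec, hbdec]
    rw [sharp_add_left L hte hxhe (by rw [add_mul, hse, hyh'e, add_zero])]
    refine hq.add_mem (hq.sharp_mem ht1 hte _ trivial
      (by rw [add_mul, hse, hyh'e, add_zero])) ?_
    rw [L.triassoc x _ _ hhe (by rw [add_mul, hse, hyh'e, add_zero]),
      L.sharp_add _ _ _ hhe hse hyh'e, mul_add]
    refine hq.add_mem (hq.mul_left ?_ x trivial) ?_
    · rw [L.sharp_comm _ _ hhe hse]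
      exact hq.sharp_mem hs1 hse _ trivial hhe
    · rw [L.sharp_comm _ _ hhe hyh'e, L.triassoc y _ _ hh'e hhe, ← mul_assoc]
      exact hq.mul_right hxy _ trivial
  -- conclude via primeness of p
  have hamem : (a * L.e ∈ p) → (a - a * L.e ∈ p) → False := by
    intro h0 h1
    have : a ∈ p := by
      have h2 := hp.add_mem h0 h1
      rwa [add_sub_cancel] at h2
    exact hap this
  have hbmem : (b * L.e ∈ p) → (b - b * L.e ∈ p) → False := by
    intro h0 h1
    have : b ∈ p := by
      have h2 := hp.add_mem h0 h1
      rwa [add_sub_cancel] at h2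
    exact hbp this
  have d1 := hp.prime00 _ ha0R _ hb0R ha0e hb0e h00
  have d2 := hp.prime01 _ ha0R _ hb1R ha0e hb1e h01
  have d3 := hp.prime01 _ hb0R _ ha1R hb0e ha1e h01'
  have d4 := hp.prime11 _ ha1R _ hb1R ha1e hb1e h11
  rcases d1 with h | hb0
  · rcases d3 with hb0 | ha1
    · rcases d2 with h' | hb1
      · exact hamem h (d4.resolve_right (fun hb1 => hbmem hb0 hb1))
      · exact hbmem hb0 hb1
    · exact hamem h ha1
  · rcases d2 with ha0 | hb1
    · rcases d3 with hb0' | ha1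
      · exact hbmem hb0 (d4.resolve_left (fun ha1 => hamem ha0 ha1))
      · exact hamem ha0 ha1
    · exact hbmem hb0 hb1
end
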